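/- arXiv:2602.12868 — 8 statements merged into one kernel-verified Lean document; each statement's English description precedes it below -/
import Mathlib

section
/- For any vectors a₁, a₂ ∈ ℂ² satisfying ‖a₁‖_∞ ≤ 1 and ‖a₂‖_∞ ≤ 1, there exists a unimodular vector x ∈ ℂ² such that |⟨x, a₁⟩| ≤ √2 and |⟨x, a₂⟩| ≤ √2. -/
open Complex Finset

lemma aux_rot (w : ℂ) (hw : w ≠ 0) :
    ‖Complex.I * (starRingEnd ℂ) w / (‖w‖ : ℂ)‖ = 1 ∧
    (Complex.I * (starRingEnd ℂ) w / (‖w‖ : ℂ) * w).re = 0 := by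
  have habs : (‖w‖ : ℝ) ≠ 0 := by
    simpa using (norm_ne_zero_iff.mpr hw)
  constructor
  · rw [norm_div, norm_mul]
    simp [Complex.norm_conj, habs]
  · have h' : Complex.I * (starRingEnd ℂ) w / (‖w‖ : ℂ) * w
        = Complex.I * (w * (starRingEnd ℂ) w / (‖w‖ : ℂ)) := by ring
    rw [h', Complex.mul_conj]
    have : ((Complex.normSq w : ℂ) / (‖w‖ : ℂ))
        = ((Complex.normSq w / ‖w‖ : ℝ) : ℂ) := by push_cast; ring
    rw [this]
    simp

lemma aux_choose (w₁ w₂ : ℂ) : ∃ u : ℂ, ‖u‖ = 1 ∧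
    (u * w₁).re ≤ 0 ∧ (u * w₂).re ≤ 0 := by
  rcases eq_or_ne w₁ 0 with h1 | h1
  · rcases eq_or_ne w₂ 0 with h2 | h2
    · exact ⟨1, by simp, by simp [h1], by simp [h2]⟩
    · obtain ⟨ha, hr⟩ := aux_rot w₂ h2
      exact ⟨_, ha, by simp [h1], le_of_eq hr⟩
  · obtain ⟨ha, hr⟩ := aux_rot w₁ h1
    set u₀ := Complex.I * (starRingEnd ℂ) w₁ / (‖w₁‖ : ℂ) with hu₀
    rcases le_or_gt ((u₀ * w₂).re) 0 with h | h
    · exact ⟨u₀, ha, le_of_eq hr, h⟩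
    · refine ⟨-u₀, by simpa using ha, ?_, ?_⟩
      · simp [neg_mul, hr]
      · simp only [neg_mul, Complex.neg_re, neg_nonpos]
        linarith

lemma aux_bound (z y : ℂ) (hz : ‖z‖ ≤ 1) (hy : ‖y‖ ≤ 1)
    (h : (z * (starRingEnd ℂ) y).re ≤ 0) :
    ‖z + y‖ ≤ Real.sqrt 2 := by
  rw [Complex.norm_def]
  apply Real.sqrt_le_sqrt
  rw [Complex.normSq_add]
  have hz2 : Complex.normSq z ≤ 1 := by
    rw [Complex.normSq_eq_norm_sq]; nlinarith [norm_nonneg z]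
  have hy2 : Complex.normSq y ≤ 1 := by
    rw [Complex.normSq_eq_norm_sq]; nlinarith [norm_nonneg y]
  linarith

/-- For any vectors `a₁, a₂ ∈ ℂ²` with `‖a₁‖_∞ ≤ 1` and `‖a₂‖_∞ ≤ 1`, there exists a
unimodular vector `x ∈ ℂ²` such that `|⟨x, a₁⟩| ≤ √2` and `|⟨x, a₂⟩| ≤ √2`. -/
theorem stmt_0 (a₁ a₂ : Fin 2 → ℂ)
    (h₁ : ∀ i, ‖a₁ i‖ ≤ 1) (h₂ : ∀ i, ‖a₂ i‖ ≤ 1) :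
    ∃ x : Fin 2 → ℂ, (∀ i, ‖x i‖ = 1) ∧
      ‖∑ i, x i * (starRingEnd ℂ) (a₁ i)‖ ≤ Real.sqrt 2 ∧
      ‖∑ i, x i * (starRingEnd ℂ) (a₂ i)‖ ≤ Real.sqrt 2 := by
  obtain ⟨u, hu, hw1, hw2⟩ := aux_choose ((starRingEnd ℂ) (a₁ 0) * a₁ 1)
    ((starRingEnd ℂ) (a₂ 0) * a₂ 1)
  refine ⟨![u, 1], ?_, ?_, ?_⟩
  · intro i
    fin_cases i <;> simp [hu]
  · rw [Fin.sum_univ_two]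
    show ‖u * (starRingEnd ℂ) (a₁ 0) + 1 * (starRingEnd ℂ) (a₁ 1)‖ ≤ _
    rw [one_mul]
    apply aux_bound
    · rw [norm_mul, hu, one_mul, Complex.norm_conj]; exact h₁ 0
    · rw [Complex.norm_conj]; exact h₁ 1
    · simpa [Complex.conj_conj, mul_assoc] using hw1
  · rw [Fin.sum_univ_two]
    show ‖u * (starRingEnd ℂ) (a₂ 0) + 1 * (starRingEnd ℂ) (a₂ 1)‖ ≤ _
    rw [one_mul]
    apply aux_bound
    · rw [norm_mul, hu, one_mul, Complex.norm_conj]; exact h₂ 0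
    · rw [Complex.norm_conj]; exact h₂ 1
    · simpa [Complex.conj_conj, mul_assoc] using hw2
end

section
/- For every ℂ-linear homeomorphism A from ℓ₁²(ℂ) onto ℓ_∞²(ℂ), one has ‖A‖ · ‖A⁻¹‖ ≥ √2, where ‖A‖ is the operator norm of A from ℓ₁²(ℂ) to ℓ_∞²(ℂ) and ‖A⁻¹‖ is the operator norm of its inverse from ℓ_∞²(ℂ) to ℓ₁²(ℂ). In particular, the Banach–Mazur distance between ℓ₁²(ℂ) and ℓ_∞²(ℂ) is at least √2. -/
open scoped ENNReal
open Complex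

lemma exists_unimodular (w₁ w₂ : ℂ) :
    ∃ l : ℂ, ‖l‖ = 1 ∧ (l * w₁).re ≤ 0 ∧ (l * w₂).re ≤ 0 := by
  by_cases h1 : w₁ = 0
  · by_cases h2 : w₂ = 0
    · exact ⟨1, by simp [h1, h2]⟩
    · refine ⟨-(starRingEnd ℂ) w₂ / ‖w₂‖, ?_, by simp [h1], ?_⟩
      · rw [norm_div, norm_neg, RCLike.norm_conj, Complex.norm_real, norm_norm,
          div_self (norm_ne_zero_iff.mpr h2)]
      · have : -(starRingEnd ℂ) w₂ / ‖w₂‖ * w₂ = -(normSq w₂ : ℂ) / ‖w₂‖ := by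
          rw [div_mul_eq_mul_div, neg_mul, mul_comm ((starRingEnd ℂ) w₂) w₂, Complex.mul_conj]
        rw [this]
        have : ((-(normSq w₂ : ℂ)) / (‖w₂‖ : ℂ)).re = -(normSq w₂) / ‖w₂‖ := by
          rw [← Complex.ofReal_neg, ← Complex.ofReal_div]
          simp
        rw [this]
        exact div_nonpos_of_nonpos_of_nonneg (neg_nonpos.mpr (normSq_nonneg _)) (norm_nonneg _)
  · set μ := Complex.I * (starRingEnd ℂ) w₁ / ‖w₁‖ with hμ
    have hnorm : ‖μ‖ = 1 := by
      simp [hμ, norm_div, norm_mul, h1, norm_ne_zero_iff.mpr h1]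
    have hre : (μ * w₁).re = 0 := by
      have : μ * w₁ = Complex.I * (normSq w₁ : ℂ) / ‖w₁‖ := by
        rw [hμ, div_mul_eq_mul_div, mul_assoc, mul_comm ((starRingEnd ℂ) w₁) w₁, Complex.mul_conj]
      rw [this]
      simp [Complex.div_re]
    by_cases h2 : (μ * w₂).re ≤ 0
    · exact ⟨μ, hnorm, le_of_eq hre, h2⟩
    · refine ⟨-μ, by simpa using hnorm, by simp [hre], ?_⟩
      have := le_of_lt (not_le.mp h2)
      simpa using neg_nonpos.mpr this


lemma coord_bound {a : ℝ} (ha : 0 ≤ a) (u v l : ℂ) (hl : ‖l‖ = 1)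
    (hre : (l * (v * (starRingEnd ℂ) u)).re ≤ 0) (hu : ‖u‖ ≤ a) (hv : ‖v‖ ≤ a) :
    ‖u + l * v‖ ≤ Real.sqrt 2 * a := by
  have hnl : normSq l = 1 := by
    rw [Complex.normSq_eq_norm_sq, hl, one_pow]
  have hconj : (starRingEnd ℂ) (u * (starRingEnd ℂ) (l * v)) = l * (v * (starRingEnd ℂ) u) := by
    simp only [map_mul, Complex.conj_conj]
    ring
  have hre' : (u * (starRingEnd ℂ) (l * v)).re ≤ 0 := by
    rw [← Complex.conj_re, hconj]; exact hre
  have hsq : normSq (u + l * v) ≤ 2 * a ^ 2 := by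
    rw [Complex.normSq_add, Complex.normSq_mul, hnl, one_mul]
    have h1 : normSq u ≤ a ^ 2 := by
      rw [Complex.normSq_eq_norm_sq]
      exact pow_le_pow_left₀ (norm_nonneg _) hu 2
    have h2 : normSq v ≤ a ^ 2 := by
      rw [Complex.normSq_eq_norm_sq]
      exact pow_le_pow_left₀ (norm_nonneg _) hv 2
    nlinarith
  have hrw : ‖u + l * v‖ = Real.sqrt (normSq (u + l * v)) := by
    rw [Complex.norm_def]
  rw [hrw]
  calc Real.sqrt (normSq (u + l * v)) ≤ Real.sqrt (2 * a ^ 2) := Real.sqrt_le_sqrt hsq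
    _ = Real.sqrt 2 * a := by
        rw [Real.sqrt_mul (by norm_num), Real.sqrt_sq ha]

/-- Every ℂ-linear homeomorphism `A` from `ℓ₁²(ℂ)` onto `ℓ_∞²(ℂ)` satisfies
`‖A‖ ⬝ ‖A⁻¹‖ ≥ √2`; in particular the Banach–Mazur distance between `ℓ₁²(ℂ)` and `ℓ_∞²(ℂ)`
is at least `√2`. -/
theorem stmt_6 (A : PiLp 1 (fun _ : Fin 2 => ℂ) ≃L[ℂ] PiLp ⊤ (fun _ : Fin 2 => ℂ)) :
    Real.sqrt 2 ≤
      ‖(A : PiLp 1 (fun _ : Fin 2 => ℂ) →L[ℂ] PiLp ⊤ (fun _ : Fin 2 => ℂ))‖ *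
        ‖(A.symm : PiLp ⊤ (fun _ : Fin 2 => ℂ) →L[ℂ] PiLp 1 (fun _ : Fin 2 => ℂ))‖ := by
  set a := ‖(A : PiLp 1 (fun _ : Fin 2 => ℂ) →L[ℂ] PiLp ⊤ (fun _ : Fin 2 => ℂ))‖ with ha
  set b := ‖(A.symm : PiLp ⊤ (fun _ : Fin 2 => ℂ) →L[ℂ] PiLp 1 (fun _ : Fin 2 => ℂ))‖ with hb
  have ha0 : 0 ≤ a := norm_nonneg _
  have hb0 : 0 ≤ b := norm_nonneg _
  have hone : (0:ℝ) < (1 : ℝ≥0∞).toReal := by norm_num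
  set e₀ : PiLp 1 (fun _ : Fin 2 => ℂ) := (WithLp.equiv 1 _).symm ![1, 0] with he₀
  set e₁ : PiLp 1 (fun _ : Fin 2 => ℂ) := (WithLp.equiv 1 _).symm ![0, 1] with he₁
  set u : PiLp ⊤ (fun _ : Fin 2 => ℂ) := A e₀ with hu
  set v : PiLp ⊤ (fun _ : Fin 2 => ℂ) := A e₁ with hv
  obtain ⟨l, hl, h0, h1⟩ :=
    exists_unimodular (v 0 * (starRingEnd ℂ) (u 0)) (v 1 * (starRingEnd ℂ) (u 1))
  -- norms of the basis vectors
  have he₀n : ‖e₀‖ = 1 := by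
    rw [PiLp.norm_eq_sum hone]
    simp [he₀, Fin.sum_univ_two, WithLp.equiv_symm_apply, PiLp.toLp_apply]
  have he₁n : ‖e₁‖ = 1 := by
    rw [PiLp.norm_eq_sum hone]
    simp [he₁, Fin.sum_univ_two, WithLp.equiv_symm_apply, PiLp.toLp_apply]
  -- coordinate bounds for u and v
  have coord_le : ∀ (w : PiLp ⊤ (fun _ : Fin 2 => ℂ)) (j : Fin 2), ‖w j‖ ≤ ‖w‖ := by
    intro w j
    rw [PiLp.norm_eq_ciSup]
    exact le_ciSup (f := fun i => ‖w i‖) (Set.Finite.bddAbove (Set.finite_range _)) j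
  have hAle : ∀ y : PiLp 1 (fun _ : Fin 2 => ℂ), ‖A y‖ ≤ a * ‖y‖ := by
    intro y
    exact (A : PiLp 1 (fun _ : Fin 2 => ℂ) →L[ℂ] PiLp ⊤ (fun _ : Fin 2 => ℂ)).le_opNorm y
  have hun : ∀ j, ‖u j‖ ≤ a := by
    intro j
    calc ‖u j‖ ≤ ‖u‖ := coord_le u j
      _ ≤ a * ‖e₀‖ := hAle e₀
      _ = a := by rw [he₀n, mul_one]
  have hvn : ∀ j, ‖v j‖ ≤ a := by
    intro j
    calc ‖v j‖ ≤ ‖v‖ := coord_le v j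
      _ ≤ a * ‖e₁‖ := hAle e₁
      _ = a := by rw [he₁n, mul_one]
  -- the test vector
  set x : PiLp 1 (fun _ : Fin 2 => ℂ) := e₀ + l • e₁ with hxdef
  have hxn : ‖x‖ = 2 := by
    rw [PiLp.norm_eq_sum hone]
    norm_num [hxdef, he₀, he₁, Fin.sum_univ_two, WithLp.equiv_symm_apply, PiLp.toLp_apply, PiLp.add_apply,
      PiLp.smul_apply, hl]
  have hAx : ∀ j, (A x) j = u j + l * v j := by
    intro j
    rw [hxdef, map_add, map_smul]
    simp [PiLp.add_apply, PiLp.smul_apply, smul_eq_mul, hu, hv]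
  have hAxn : ‖A x‖ ≤ Real.sqrt 2 * a := by
    rw [PiLp.norm_eq_ciSup]
    refine ciSup_le fun j => ?_
    rw [hAx j]
    fin_cases j
    · exact coord_bound ha0 _ _ _ hl h0 (hun 0) (hvn 0)
    · exact coord_bound ha0 _ _ _ hl h1 (hun 1) (hvn 1)
  have hback : ‖x‖ ≤ b * ‖A x‖ := by
    have hxx : x = A.symm (A x) := (A.symm_apply_apply x).symm
    calc ‖x‖ = ‖A.symm (A x)‖ := by rw [← hxx]
      _ ≤ b * ‖A x‖ :=
        (A.symm : PiLp ⊤ (fun _ : Fin 2 => ℂ) →L[ℂ] PiLp 1 (fun _ : Fin 2 => ℂ)).le_opNorm (A x)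
  have key : (2:ℝ) ≤ b * (Real.sqrt 2 * a) := by
    calc (2:ℝ) = ‖x‖ := hxn.symm
      _ ≤ b * ‖A x‖ := hback
      _ ≤ b * (Real.sqrt 2 * a) := by
          exact mul_le_mul_of_nonneg_left hAxn hb0
  nlinarith [Real.sq_sqrt (by norm_num : (0:ℝ) ≤ 2), Real.sqrt_nonneg 2, Real.sqrt_pos.mpr (by norm_num : (0:ℝ) < 2)]
end

section
/- For any complex 2×2 matrix A, the operator norm of A from ℓ_∞²(ℂ) to ℓ₁²(ℂ) satisfies ‖A‖_{∞→1} ≥ 2·√|det A|. -/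
open scoped ENNReal

lemma key (c₀ c₁ c₂ : ℂ) :
    ∃ z : ℂ, ‖z‖ = 1 ∧
      ‖c₁ ^ 2 - 4 * c₀ * c₂‖ ≤ ‖c₀ + c₁ * z + c₂ * z ^ 2‖ ^ 2 := by
  obtain ⟨ρ, hρ⟩ := IsAlgClosed.exists_pow_nat_eq (c₀ * (starRingEnd ℂ) c₂) (n := 2) (by norm_num)
  set ω : ℂ := if ρ = 0 then 1 else ρ / (‖ρ‖ : ℂ) with hωdef
  have hω : ‖ω‖ = 1 := by
    rw [hωdef]
    split_ifs with h
    · simp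
    · rw [norm_div]
      simp [Complex.norm_real, div_self (norm_ne_zero_iff.mpr h)]
  have hω2 : ‖c₀ + c₂ * ω ^ 2‖ = ‖c₀‖ + ‖c₂‖ := by
    rw [hωdef]
    split_ifs with h
    · have h0 : c₀ * (starRingEnd ℂ) c₂ = 0 := by rw [← hρ, h]; ring
      rcases mul_eq_zero.1 h0 with h1 | h1
      · simp [h1]
      · have h2 : c₂ = 0 := by simpa using h1
        simp [h2]
    · have habs : ((‖ρ‖ : ℂ)) ^ 2 = (‖c₀‖ : ℂ) * (‖c₂‖ : ℂ) := by
        have h5 : (‖ρ‖) ^ 2 = ‖c₀‖ * ‖c₂‖ := by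
          rw [← norm_pow, hρ, norm_mul]
          simp
        norm_cast
      have hc₀ : c₀ ≠ 0 := by
        intro h1
        apply h
        have : ρ ^ 2 = 0 := by rw [hρ, h1]; ring
        exact pow_eq_zero_iff (by norm_num) |>.1 this
      have hc₂ : c₂ ≠ 0 := by
        intro h1
        apply h
        have : ρ ^ 2 = 0 := by rw [hρ, h1]; simp
        exact pow_eq_zero_iff (by norm_num) |>.1 this
      have ha0 : (‖c₀‖ : ℂ) ≠ 0 := by
        simpa using norm_ne_zero_iff.mpr hc₀
      have hb0 : (‖c₂‖ : ℂ) ≠ 0 := by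
        simpa using norm_ne_zero_iff.mpr hc₂
      have hrω : (ρ / (‖ρ‖ : ℂ)) ^ 2 = c₀ * (starRingEnd ℂ) c₂ / ((‖c₀‖ : ℂ) * (‖c₂‖ : ℂ)) := by
        rw [div_pow, hρ, habs]
      have hcc : c₂ * ((starRingEnd ℂ) c₂) = ((‖c₂‖ : ℂ))^2 := by
        rw [Complex.mul_conj, Complex.normSq_eq_norm_sq]
        norm_cast
      have key2 : c₀ + c₂ * (ρ / (‖ρ‖ : ℂ)) ^ 2
          = c₀ * (1 + (‖c₂‖ : ℂ) / (‖c₀‖ : ℂ)) := by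
        rw [hrω]
        field_simp
        linear_combination hcc
      rw [key2, norm_mul]
      have h1 : ‖(1 + ((‖c₂‖ : ℝ) : ℂ) / ((‖c₀‖ : ℝ) : ℂ))‖
          = 1 + ‖c₂‖ / ‖c₀‖ := by
        rw [← Complex.ofReal_one, ← Complex.ofReal_div, ← Complex.ofReal_add, Complex.norm_real, Real.norm_eq_abs,
          abs_of_nonneg (by positivity)]
      rw [h1]
      have ha0' : ‖c₀‖ ≠ 0 := norm_ne_zero_iff.mpr hc₀
      field_simp
  set u := c₀ + c₂ * ω ^ 2 with hu
  set v := c₁ * ω with hv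
  have par := parallelogram_law_with_norm ℂ u v
  have hbound : ‖c₁ ^ 2 - 4 * c₀ * c₂‖ ≤ ‖u‖ * ‖u‖ + ‖v‖ * ‖v‖ := by
    have h1 : ‖c₁ ^ 2 - 4 * c₀ * c₂‖ ≤ ‖c₁‖ ^ 2 + 4 * (‖c₀‖ * ‖c₂‖) := by
      calc ‖c₁ ^ 2 - 4 * c₀ * c₂‖ ≤ ‖c₁ ^ 2‖ + ‖4 * c₀ * c₂‖ :=
        norm_sub_le _ _
      _ = ‖c₁‖ ^ 2 + 4 * (‖c₀‖ * ‖c₂‖) := by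
          rw [norm_pow, norm_mul, norm_mul]
          simp
          ring
    have h2 : ‖u‖ = ‖c₀‖ + ‖c₂‖ := by rw [hω2]
    have h3 : ‖v‖ = ‖c₁‖ := by
      rw [hv, norm_mul, hω, mul_one]
    rw [h2, h3]
    nlinarith [norm_nonneg c₀, norm_nonneg c₂, sq_nonneg (‖c₀‖ - ‖c₂‖)]
  rcases le_total ‖u - v‖ ‖u + v‖ with hle | hle
  · refine ⟨ω, hω, le_trans hbound ?_⟩
    have hzv : c₀ + c₁ * ω + c₂ * ω ^ 2 = u + v := by rw [hu, hv]; ring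
    rw [hzv]
    nlinarith [norm_nonneg (u - v), norm_nonneg (u + v)]
  · refine ⟨-ω, by simpa using hω, le_trans hbound ?_⟩
    have hzv : c₀ + c₁ * (-ω) + c₂ * (-ω) ^ 2 = u - v := by rw [hu, hv]; ring
    rw [hzv]
    nlinarith [norm_nonneg (u - v), norm_nonneg (u + v)]

set_option maxHeartbeats 2000000 in
/-- For every complex `2 × 2` matrix `A`, the operator norm of `A` from `ℓ_∞²(ℂ)` to `ℓ₁²(ℂ)`
satisfies `‖A‖_{∞→1} ≥ 2√|det A|`. -/
theorem stmt_9 (A : Matrix (Fin 2) (Fin 2) ℂ) :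
    2 * Real.sqrt ‖A.det‖ ≤
      ‖(LinearMap.toContinuousLinearMap
        ((WithLp.linearEquiv 1 ℂ (Fin 2 → ℂ)).symm.toLinearMap ∘ₗ A.mulVecLin ∘ₗ
          (WithLp.linearEquiv ⊤ ℂ (Fin 2 → ℂ)).toLinearMap :
        PiLp ⊤ (fun _ : Fin 2 => ℂ) →ₗ[ℂ] PiLp 1 (fun _ : Fin 2 => ℂ)))‖ := by
  set T := (LinearMap.toContinuousLinearMap
        ((WithLp.linearEquiv 1 ℂ (Fin 2 → ℂ)).symm.toLinearMap ∘ₗ A.mulVecLin ∘ₗ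
          (WithLp.linearEquiv ⊤ ℂ (Fin 2 → ℂ)).toLinearMap :
        PiLp ⊤ (fun _ : Fin 2 => ℂ) →ₗ[ℂ] PiLp 1 (fun _ : Fin 2 => ℂ))) with hT
  set a := A 0 0; set b := A 0 1; set c := A 1 0; set d := A 1 1
  obtain ⟨z, hz, hkey⟩ := key (a * c) (a * d + b * c) (b * d)
  set x : PiLp ⊤ (fun _ : Fin 2 => ℂ) := (WithLp.equiv ⊤ (Fin 2 → ℂ)).symm ![1, z] with hx
  have hxnorm : ‖x‖ ≤ 1 := by
    rw [PiLp.norm_eq_ciSup]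
    apply ciSup_le
    intro i
    fin_cases i <;> simp [hx, hz]
  have hTx : ‖T x‖ = ‖a + b * z‖ + ‖c + d * z‖ := by
    have h1 : T x = (WithLp.equiv 1 (Fin 2 → ℂ)).symm (A.mulVec ![1, z]) := by
      simp [hT, hx]
    rw [h1, PiLp.norm_eq_sum (by norm_num)]
    simp [Matrix.mulVec, dotProduct, Fin.sum_univ_two]
    rfl
  -- product lower bound
  have hprod : ‖A.det‖ ≤ ‖a + b * z‖ * ‖c + d * z‖ := by
    have hdet : (a * d + b * c) ^ 2 - 4 * (a * c) * (b * d) = (A.det) ^ 2 := by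
      rw [Matrix.det_fin_two]
      ring
    have hg : (a * c + (a * d + b * c) * z + b * d * z ^ 2) = (a + b * z) * (c + d * z) := by
      ring
    rw [hdet, hg, norm_mul] at hkey
    have h2 : ‖A.det ^ 2‖ = ‖A.det‖ ^ 2 := norm_pow _ _
    rw [h2] at hkey
    nlinarith [norm_nonneg A.det, norm_nonneg ((a + b * z) * (c + d * z)),
      norm_mul (a + b * z) (c + d * z)]
  have hsum : 2 * Real.sqrt ‖A.det‖ ≤
      ‖a + b * z‖ + ‖c + d * z‖ := by
    set p := ‖a + b * z‖
    set q := ‖c + d * z‖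
    have hp : (0:ℝ) ≤ p := norm_nonneg _
    have hq : (0:ℝ) ≤ q := norm_nonneg _
    have h1 : Real.sqrt ‖A.det‖ ≤ Real.sqrt (p * q) :=
      Real.sqrt_le_sqrt hprod
    have h2 : Real.sqrt (p * q) = Real.sqrt p * Real.sqrt q := Real.sqrt_mul hp q
    nlinarith [Real.sq_sqrt hp, Real.sq_sqrt hq, sq_nonneg (Real.sqrt p - Real.sqrt q),
      Real.sqrt_nonneg p, Real.sqrt_nonneg q]
  calc 2 * Real.sqrt ‖A.det‖
      ≤ ‖T x‖ := by rw [hTx]; exact hsum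
    _ ≤ ‖T‖ * ‖x‖ := T.le_opNorm x
    _ ≤ ‖T‖ := mul_le_of_le_one_right (norm_nonneg T) hxnorm
end

section
/- Let n ≥ 1 and suppose that every ℂ-linear homeomorphism A from ℓ₁ⁿ(ℂ) onto ℓ_∞ⁿ(ℂ) satisfies ‖A‖ · ‖A⁻¹‖ ≥ √n (i.e. the Banach–Mazur distance between ℓ₁ⁿ(ℂ) and ℓ_∞ⁿ(ℂ) equals √n). Then for every complex n×n Hadamard matrix H there exists a unimodular vector x ∈ ℂⁿ such that every coordinate of the vector Hx has modulus √n, i.e. (1/√n)·Hx is unimodular. -/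
open scoped ENNReal
open Finset
open Matrix in
set_option maxHeartbeats 1000000 in
/-- Suppose every ℂ-linear homeomorphism `A : ℓ₁ⁿ(ℂ) → ℓ_∞ⁿ(ℂ)` satisfies
`‖A‖ ⬝ ‖A⁻¹‖ ≥ √n` (so the Banach–Mazur distance between `ℓ₁ⁿ(ℂ)` and `ℓ_∞ⁿ(ℂ)` is `√n`).
Then for every complex `n × n` Hadamard matrix `H` there is a unimodular vector `x ∈ ℂⁿ`
such that every coordinate of `H x` has modulus `√n`. -/
theorem stmt_11 (n : ℕ) (hn : 1 ≤ n)
    (hBM : ∀ A : PiLp 1 (fun _ : Fin n => ℂ) ≃L[ℂ] PiLp ⊤ (fun _ : Fin n => ℂ),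
      Real.sqrt n ≤
        ‖(A : PiLp 1 (fun _ : Fin n => ℂ) →L[ℂ] PiLp ⊤ (fun _ : Fin n => ℂ))‖ *
          ‖(A.symm : PiLp ⊤ (fun _ : Fin n => ℂ) →L[ℂ] PiLp 1 (fun _ : Fin n => ℂ))‖)
    (H : Matrix (Fin n) (Fin n) ℂ)
    (hmod : ∀ i j, ‖H i j‖ = 1)
    (horth : ∀ j k, j ≠ k → ∑ i, H i j * (starRingEnd ℂ) (H i k) = 0) :
    ∃ x : Fin n → ℂ, (∀ i, ‖x i‖ = 1) ∧
      ∀ i, ‖H.mulVec x i‖ = Real.sqrt n := by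
  classical
  have hn0 : (0:ℝ) < n := by exact_mod_cast hn
  have hnC : (n:ℂ) ≠ 0 := by exact_mod_cast hn0.ne'
  have hne : Nonempty (Fin n) := ⟨⟨0, hn⟩⟩
  -- `Hᴴ * H = n • 1`
  have hstar : Hᴴ * H = (n:ℂ) • 1 := by
    ext k j
    rw [Matrix.mul_apply]
    by_cases h : k = j
    · subst h
      have h1 : ∀ i, Hᴴ k i * H i k = 1 := by
        intro i
        have h2 : Complex.normSq (H i k) = 1 := by
          rw [← Complex.sq_norm, hmod]; norm_num
        calc Hᴴ k i * H i k = H i k * (starRingEnd ℂ) (H i k) := by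
              rw [Matrix.conjTranspose_apply, Complex.star_def, mul_comm]
          _ = ↑(Complex.normSq (H i k)) := Complex.mul_conj _
          _ = 1 := by rw [h2]; norm_num
      rw [Finset.sum_congr rfl (fun i _ => h1 i), Finset.sum_const, Finset.card_univ]
      simp [Matrix.one_apply_eq]
    · have h2 : ∑ i, Hᴴ k i * H i j = (starRingEnd ℂ) (∑ i, H i k * (starRingEnd ℂ) (H i j)) := by
        rw [map_sum]
        refine Finset.sum_congr rfl (fun i _ => ?_)
        rw [Matrix.conjTranspose_apply]
        simp [mul_comm]
      rw [h2, horth k j h, map_zero]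
      simp [Matrix.one_apply_ne h, h]
  have hleft : ((n:ℂ)⁻¹ • Hᴴ) * H = 1 := by
    rw [Matrix.smul_mul, hstar, smul_smul, inv_mul_cancel₀ hnC, one_smul]
  have hright : H * ((n:ℂ)⁻¹ • Hᴴ) = 1 := mul_eq_one_comm.mp hleft
  -- the continuous linear equivalence
  let e0 : (Fin n → ℂ) ≃ₗ[ℂ] (Fin n → ℂ) :=
    { toFun := fun x => ((n:ℂ)⁻¹ • Hᴴ).mulVec x
      map_add' := fun x y => Matrix.mulVec_add _ x y
      map_smul' := fun c x => Matrix.mulVec_smul _ c x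
      invFun := fun x => H.mulVec x
      left_inv := fun x => by
        simp only [Matrix.mulVec_mulVec, hright, Matrix.one_mulVec]
      right_inv := fun x => by
        simp only [Matrix.mulVec_mulVec, hleft, Matrix.one_mulVec] }
  let eA : PiLp 1 (fun _ : Fin n => ℂ) ≃ₗ[ℂ] PiLp ⊤ (fun _ : Fin n => ℂ) :=
    (WithLp.linearEquiv 1 ℂ (∀ _ : Fin n, ℂ)).trans
      (e0.trans (WithLp.linearEquiv ⊤ ℂ (∀ _ : Fin n, ℂ)).symm)
  let A : PiLp 1 (fun _ : Fin n => ℂ) ≃L[ℂ] PiLp ⊤ (fun _ : Fin n => ℂ) :=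
    eA.toContinuousLinearEquiv
  have hAapp : ∀ x, A x = ((n:ℂ)⁻¹ • Hᴴ).mulVec x := fun x => rfl
  have hAsymm : ∀ x, A.symm x = H.mulVec x := fun x => rfl
  -- norms on the two spaces
  have hnorm1 : ∀ x : PiLp 1 (fun _ : Fin n => ℂ), ‖x‖ = ∑ j, ‖x j‖ := by
    intro x
    rw [PiLp.norm_eq_sum (by norm_num : (0:ℝ) < (1:ℝ≥0∞).toReal)]
    simp
  have hnormtop : ∀ (x : PiLp ⊤ (fun _ : Fin n => ℂ)) i, ‖x i‖ ≤ ‖x‖ := by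
    intro x i
    rw [PiLp.norm_eq_ciSup]
    exact le_ciSup (f := fun i => ‖x i‖) (Set.Finite.bddAbove (Set.finite_range _)) i
  -- ‖A‖ ≤ 1/n
  have hAnorm : ‖(A : PiLp 1 (fun _ : Fin n => ℂ) →L[ℂ] PiLp ⊤ (fun _ : Fin n => ℂ))‖ ≤ (n:ℝ)⁻¹ := by
    refine ContinuousLinearMap.opNorm_le_bound _ (by positivity) (fun x => ?_)
    have hbd : ∀ i, ‖(A x) i‖ ≤ (n:ℝ)⁻¹ * ‖x‖ := by
      intro i
      rw [hAapp]
      have he : (((n:ℂ)⁻¹ • Hᴴ).mulVec x) i = (n:ℂ)⁻¹ * ∑ j, Hᴴ i j * x j := by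
        simp [Matrix.mulVec, dotProduct, Finset.mul_sum, mul_assoc]
      rw [he, norm_mul]
      have h1 : ‖((n:ℂ)⁻¹ : ℂ)‖ = (n:ℝ)⁻¹ := by simp
      rw [h1, hnorm1]
      refine mul_le_mul_of_nonneg_left ?_ (by positivity)
      calc ‖∑ j, Hᴴ i j * x j‖ ≤ ∑ j, ‖Hᴴ i j * x j‖ := norm_sum_le _ _
        _ = ∑ j, ‖x j‖ := by
            refine Finset.sum_congr rfl (fun j _ => ?_)
            rw [norm_mul, Matrix.conjTranspose_apply]
            simp [hmod]
    exact ciSup_le hbd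
  -- pick a maximizer of `‖A.symm ·‖` on the closed unit ball
  obtain ⟨x₀, hx₀mem, hx₀max⟩ :
      ∃ x₀ ∈ Metric.closedBall (0 : PiLp ⊤ (fun _ : Fin n => ℂ)) 1,
        ∀ y ∈ Metric.closedBall (0 : PiLp ⊤ (fun _ : Fin n => ℂ)) 1,
          ‖A.symm y‖ ≤ ‖A.symm x₀‖ := by
    have hK : IsCompact (Metric.closedBall (0 : PiLp ⊤ (fun _ : Fin n => ℂ)) 1) :=
      isCompact_closedBall _ _
    obtain ⟨x₀, hmem, hmax⟩ := hK.exists_isMaxOn ⟨0, Metric.mem_closedBall_self zero_le_one⟩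
      (((A.symm : PiLp ⊤ (fun _ : Fin n => ℂ) →L[ℂ] PiLp 1 (fun _ : Fin n => ℂ)).continuous.norm).continuousOn)
    exact ⟨x₀, hmem, fun y hy => hmax hy⟩
  have hx₀norm : ‖x₀‖ ≤ 1 := by simpa using hx₀mem
  have hA'le : ‖(A.symm : PiLp ⊤ (fun _ : Fin n => ℂ) →L[ℂ] PiLp 1 (fun _ : Fin n => ℂ))‖
      ≤ ‖A.symm x₀‖ := by
    refine ContinuousLinearMap.opNorm_le_bound _ (norm_nonneg _) (fun y => ?_)
    rcases eq_or_ne y 0 with rfl | hy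
    · simp
    · have hy' : ‖y‖ ≠ 0 := norm_ne_zero_iff.mpr hy
      have hc : ‖((‖y‖⁻¹ : ℝ) : ℂ)‖ = ‖y‖⁻¹ := by
        rw [Complex.norm_real, Real.norm_eq_abs, abs_of_nonneg (by positivity)]
      have h1 : (((‖y‖⁻¹ : ℝ) : ℂ) • y : PiLp ⊤ (fun _ : Fin n => ℂ)) ∈
          Metric.closedBall (0 : PiLp ⊤ (fun _ : Fin n => ℂ)) 1 := by
        rw [Metric.mem_closedBall, dist_zero_right, norm_smul, hc,
          inv_mul_cancel₀ hy']
      have h2 := hx₀max _ h1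
      rw [_root_.map_smul, norm_smul, hc] at h2
      have h3 : ‖A.symm y‖ = ‖y‖ * (‖y‖⁻¹ * ‖A.symm y‖) := by
        field_simp
      show ‖A.symm y‖ ≤ ‖A.symm x₀‖ * ‖y‖
      calc ‖A.symm y‖
          = ‖y‖ * (‖y‖⁻¹ * ‖A.symm y‖) := h3
        _ ≤ ‖y‖ * ‖A.symm x₀‖ := mul_le_mul_of_nonneg_left h2 (norm_nonneg y)
        _ = ‖A.symm x₀‖ * ‖y‖ := mul_comm _ _
  -- hence `∑ |(Hx₀)_i| ≥ n √n`
  have hmain : (n:ℝ) * Real.sqrt n ≤ ∑ i, ‖H.mulVec x₀ i‖ := by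
    have h0 := hBM A
    have h1 : Real.sqrt n ≤ (n:ℝ)⁻¹ * ‖A.symm x₀‖ :=
      h0.trans (mul_le_mul hAnorm hA'le (norm_nonneg _) (by positivity))
    have h2 : (n:ℝ) * Real.sqrt n ≤ ‖A.symm x₀‖ := by
      have := mul_le_mul_of_nonneg_left h1 hn0.le
      rwa [← mul_assoc, mul_inv_cancel₀ hn0.ne', one_mul] at this
    calc (n:ℝ) * Real.sqrt n ≤ ‖A.symm x₀‖ := h2
      _ = ∑ i, ‖H.mulVec x₀ i‖ := by rw [hnorm1, hAsymm]
  set v : Fin n → ℂ := H.mulVec x₀ with hv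
  set a : Fin n → ℝ := fun i => ‖v i‖ with ha
  set b : Fin n → ℝ := fun j => ‖x₀ j‖ with hb
  have hb1 : ∀ j, b j ≤ 1 := fun j => le_trans (hnormtop x₀ j) hx₀norm
  have hbnn : ∀ j, 0 ≤ b j := fun j => norm_nonneg _
  have hann : ∀ i, 0 ≤ a i := fun i => norm_nonneg _
  -- Parseval: ∑ a² = n ∑ b²
  have hpar : ∑ i, a i ^ 2 = (n:ℝ) * ∑ j, b j ^ 2 := by
    have e1 : ∀ z : ℂ, (Complex.normSq z : ℂ) = star z * z := by
      intro z; rw [← Complex.mul_conj, mul_comm]; rfl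
    have hone : ∀ w : Fin n → ℂ,
        Matrix.vecMul w ((n:ℂ) • (1 : Matrix (Fin n) (Fin n) ℂ)) = (n:ℂ) • w := by
      intro w
      ext j
      simp [Matrix.vecMul, dotProduct, Matrix.smul_apply, Matrix.one_apply,
        mul_ite, mul_comm]
    have hc : (∑ i, (Complex.normSq (v i) : ℂ)) = (n:ℂ) * ∑ j, (Complex.normSq (x₀ j) : ℂ) := by
      calc (∑ i, (Complex.normSq (v i) : ℂ)) = ∑ i, star (v i) * v i := by
            simp only [e1]
        _ = dotProduct (star v) v := rfl
        _ = dotProduct (Matrix.vecMul (star (x₀ : Fin n → ℂ)) Hᴴ) v := by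
            rw [hv, Matrix.star_mulVec]
        _ = dotProduct (Matrix.vecMul (Matrix.vecMul (star (x₀ : Fin n → ℂ)) Hᴴ) H)
              (x₀ : Fin n → ℂ) := by
            rw [hv, Matrix.dotProduct_mulVec]
        _ = dotProduct (Matrix.vecMul (star (x₀ : Fin n → ℂ))
              ((n:ℂ) • (1 : Matrix (Fin n) (Fin n) ℂ))) (x₀ : Fin n → ℂ) := by
            rw [Matrix.vecMul_vecMul, hstar]
        _ = (n:ℂ) * dotProduct (star (x₀ : Fin n → ℂ)) (x₀ : Fin n → ℂ) := by
            rw [hone, smul_dotProduct, smul_eq_mul]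
        _ = (n:ℂ) * ∑ j, (Complex.normSq (x₀ j) : ℂ) := by
            rw [dotProduct]
            congr 1
            exact Finset.sum_congr rfl (fun j _ => (e1 _).symm)
    have hr : (∑ i, Complex.normSq (v i)) = (n:ℝ) * ∑ j, Complex.normSq (x₀ j) := by
      exact_mod_cast hc
    calc ∑ i, a i ^ 2 = ∑ i, Complex.normSq (v i) :=
          Finset.sum_congr rfl (fun i _ => Complex.sq_norm _)
      _ = (n:ℝ) * ∑ j, Complex.normSq (x₀ j) := hr
      _ = (n:ℝ) * ∑ j, b j ^ 2 := by
          congr 1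
          exact Finset.sum_congr rfl (fun j _ => (Complex.sq_norm _).symm)
  -- Cauchy–Schwarz chain forcing equality everywhere
  have hCS : (∑ i, a i) ^ 2 ≤ (n:ℝ) * ∑ i, a i ^ 2 := by
    have := sq_sum_le_card_mul_sum_sq (s := (univ : Finset (Fin n))) (f := a)
    simpa using this
  have hbsum_le : ∑ j, b j ^ 2 ≤ (n:ℝ) := by
    calc ∑ j, b j ^ 2 ≤ ∑ _j : Fin n, (1:ℝ) := by
          refine Finset.sum_le_sum (fun j _ => ?_)
          nlinarith [hbnn j, hb1 j]
      _ = n := by simp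
  have hsq : ((n:ℝ) * Real.sqrt n) ^ 2 = (n:ℝ)^3 := by
    rw [mul_pow, Real.sq_sqrt hn0.le]; ring
  have hchain : (∑ i, a i) ^ 2 ≤ (n:ℝ)^3 := by
    calc (∑ i, a i)^2 ≤ (n:ℝ) * ∑ i, a i ^ 2 := hCS
      _ = (n:ℝ)^2 * ∑ j, b j ^2 := by rw [hpar]; ring
      _ ≤ (n:ℝ)^2 * n := mul_le_mul_of_nonneg_left hbsum_le (by positivity)
      _ = (n:ℝ)^3 := by ring
  have hlow : (n:ℝ)^3 ≤ (∑ i, a i)^2 := by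
    rw [← hsq]
    exact pow_le_pow_left₀ (by positivity) hmain 2
  have hsum_eq : ∑ i, a i = (n:ℝ) * Real.sqrt n := by
    have h1 : (∑ i, a i)^2 = ((n:ℝ) * Real.sqrt n)^2 := by
      rw [hsq]; exact le_antisymm hchain hlow
    have h2 : 0 ≤ ∑ i, a i := Finset.sum_nonneg (fun i _ => hann i)
    have h3 : (0:ℝ) ≤ (n:ℝ) * Real.sqrt n := by positivity
    calc ∑ i, a i = Real.sqrt ((∑ i, a i)^2) := (Real.sqrt_sq h2).symm
      _ = Real.sqrt (((n:ℝ) * Real.sqrt n)^2) := by rw [h1]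
      _ = (n:ℝ) * Real.sqrt n := Real.sqrt_sq h3
  have hbsum_eq : ∑ j, b j ^ 2 = (n:ℝ) := by
    have h1 : (n:ℝ)^3 ≤ (n:ℝ)^2 * ∑ j, b j ^ 2 := by
      calc (n:ℝ)^3 ≤ (∑ i, a i)^2 := hlow
        _ ≤ (n:ℝ) * ∑ i, a i ^2 := hCS
        _ = (n:ℝ)^2 * ∑ j, b j ^2 := by rw [hpar]; ring
    have hn2 : (0:ℝ) < (n:ℝ)^2 := by positivity
    have h2 : (n:ℝ) ≤ ∑ j, b j ^ 2 := by nlinarith [h1, hn2]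
    linarith [hbsum_le]
  have hasum_sq : ∑ i, a i ^ 2 = (n:ℝ)^2 := by
    rw [hpar, hbsum_eq]; ring
  -- deduce each |x₀ j| = 1
  have hbj : ∀ j, b j = 1 := by
    have hz : ∑ j, ((1:ℝ) - b j ^ 2) = 0 := by
      rw [Finset.sum_sub_distrib, hbsum_eq]
      simp
    have hnn : ∀ j ∈ (univ : Finset (Fin n)), 0 ≤ (1:ℝ) - b j ^ 2 := by
      intro j _
      nlinarith [hb1 j, hbnn j]
    intro j
    have := (Finset.sum_eq_zero_iff_of_nonneg hnn).mp hz j (mem_univ j)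
    nlinarith [hbnn j]
  -- deduce each |v i| = √n
  have haj : ∀ i, a i = Real.sqrt n := by
    have hz : ∑ i, (a i - Real.sqrt n) ^ 2 = 0 := by
      have expand : ∑ i, (a i - Real.sqrt n)^2
          = ∑ i, a i ^2 - 2 * Real.sqrt n * ∑ i, a i + (n:ℝ) * (Real.sqrt n)^2 := by
        rw [Finset.mul_sum]
        rw [Finset.sum_congr rfl (fun i _ => sub_sq (a i) (Real.sqrt n))]
        rw [Finset.sum_add_distrib, Finset.sum_sub_distrib]
        simp [Finset.mul_sum, mul_comm, mul_assoc, mul_left_comm]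
      rw [expand, hasum_sq, hsum_eq]
      nlinarith [Real.sq_sqrt hn0.le]
    intro i
    have h1 := (Finset.sum_eq_zero_iff_of_nonneg
      (fun i _ => sq_nonneg (a i - Real.sqrt n))).mp hz i (mem_univ i)
    have h2 : a i - Real.sqrt n = 0 := pow_eq_zero_iff (n := 2) (by norm_num) |>.mp h1
    linarith
  exact ⟨x₀, hbj, haj⟩
end

section
/- Let ω = exp(2πi/3) and let a_j = (1, ω^j, 0) ∈ ℂ³ for j = 1, 2, 3. Then for every unimodular vector x ∈ ℂ³ there exists j ∈ {1, 2, 3} such that |⟨x, a_j⟩| ≥ √3. -/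
open Complex Finset

/-- Let `ω = exp(2πi/3)` and `a_j = (1, ω^j, 0)` for `j = 1, 2, 3`. Then for every unimodular
`x ∈ ℂ³` there exists `j ∈ {1, 2, 3}` with `|⟨x, a_j⟩| ≥ √3`. -/
theorem stmt_12 (ω : ℂ) (hω : ω = Complex.exp (2 * Real.pi * Complex.I / 3))
    (x : Fin 3 → ℂ) (hx : ∀ i, ‖x i‖ = 1) :
    ∃ j ∈ ({1, 2, 3} : Finset ℕ),
      Real.sqrt 3 ≤
        ‖∑ i, x i * (starRingEnd ℂ) (![1, ω ^ j, 0] i)‖ := by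
  have hω0 : ω ≠ 0 := by rw [hω]; exact Complex.exp_ne_zero _
  have hprim : IsPrimitiveRoot ω 3 := by
    rw [hω]; convert Complex.isPrimitiveRoot_exp 3 (by norm_num) using 2; norm_num
  have hω3 : ω ^ 3 = 1 := hprim.pow_eq_one
  have hωs : 1 + ω + ω ^ 2 = 0 := by
    have := hprim.geom_sum_eq_zero (by norm_num)
    simpa [Finset.sum_range_succ] using this
  -- conj ω = ω²
  have hnsω : Complex.normSq ω = 1 := by
    have h1 : Complex.normSq ω ^ 3 = 1 := by
      rw [← map_pow, hω3, map_one]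
    have h2 : (Complex.normSq ω - 1) * (Complex.normSq ω ^ 2 + Complex.normSq ω + 1) = 0 := by
      linear_combination h1
    have h3 : Complex.normSq ω ^ 2 + Complex.normSq ω + 1 > 0 := by nlinarith [sq_nonneg (Complex.normSq ω + 1/2)]
    have := mul_eq_zero.mp h2
    rcases this with h | h
    · linarith
    · linarith
  have hmc : ω * (starRingEnd ℂ) ω = 1 := by
    rw [Complex.mul_conj, hnsω]; norm_num
  have hcω : (starRingEnd ℂ) ω = ω ^ 2 := by
    apply mul_left_cancel₀ hω0
    rw [hmc, ← hω3]; ring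
  set a := x 0 with ha'
  set b := x 1 with hb'
  have ha : a * (starRingEnd ℂ) a = 1 := by
    rw [Complex.mul_conj, Complex.normSq_eq_norm_sq, hx 0]; norm_num
  have hb : b * (starRingEnd ℂ) b = 1 := by
    rw [Complex.mul_conj, Complex.normSq_eq_norm_sq, hx 1]; norm_num
  set u := a * (starRingEnd ℂ) b with hu'
  set r1 := (u * ω).re with hr1
  set r2 := (u * ω ^ 2).re with hr2
  set r3 := (u * ω ^ 3).re with hr3
  -- sum of r's is 0
  have hsum0 : u * ω + u * ω ^ 2 + u * ω ^ 3 = 0 := by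
    linear_combination u * hωs + u * hω3
  have hrsum : r1 + r2 + r3 = 0 := by
    have := congrArg Complex.re hsum0
    simp only [Complex.add_re, Complex.zero_re] at this; rw [hr1, hr2, hr3]; exact this
  -- each |u ω^j| = 1 (as u ω^j * conj = 1)
  have hcu : (starRingEnd ℂ) u = (starRingEnd ℂ) a * b := by
    rw [hu', map_mul, Complex.conj_conj]
  have huu : u * (starRingEnd ℂ) u = 1 := by
    rw [hcu]; linear_combination (b * (starRingEnd ℂ) b) * ha + hb
  have key : ∀ j : ℕ, (u * ω ^ j) * (starRingEnd ℂ) (u * ω ^ j) = 1 := by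
    intro j
    rw [map_mul, map_pow, hcω]
    have h3j : (ω ^ 3) ^ j = 1 := by rw [hω3, one_pow]
    calc u * ω ^ j * ((starRingEnd ℂ) u * (ω ^ 2) ^ j)
        = (u * (starRingEnd ℂ) u) * (ω ^ 3) ^ j := by ring
      _ = 1 := by rw [huu, h3j, mul_one]
  -- re squared formula
  have hresq : ∀ v : ℂ, v.re ^ 2 = ((v * v).re + (v * (starRingEnd ℂ) v).re) / 2 := by
    intro v
    simp [Complex.mul_re, Complex.conj_re, Complex.conj_im]
    ring
  have hv2 : (u * ω) * (u * ω) + (u * ω ^ 2) * (u * ω ^ 2) + (u * ω ^ 3) * (u * ω ^ 3) = 0 := by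
    linear_combination u ^ 2 * hωs + u ^ 2 * (ω + ω ^ 3 + 1) * hω3
  have hrsq : r1 ^ 2 + r2 ^ 2 + r3 ^ 2 = 3 / 2 := by
    have key1 : (u * ω) * (starRingEnd ℂ) (u * ω) = 1 := by simpa using key 1
    rw [hr1, hr2, hr3, hresq, hresq, hresq, key1, key 2, key 3]
    have h2 := congrArg Complex.re hv2
    simp only [Complex.add_re, Complex.zero_re, Complex.one_re] at h2 ⊢
    norm_num [pow_one] at h2 ⊢
    linarith
  -- one of r1 r2 r3 is ≥ 1/2
  have hcase : 1 / 2 ≤ r1 ∨ 1 / 2 ≤ r2 ∨ 1 / 2 ≤ r3 := by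
    by_contra h
    push_neg at h
    obtain ⟨h1, h2, h3⟩ := h
    nlinarith [mul_pos (by linarith : (0:ℝ) < 1 / 2 - r1) (by linarith : (0:ℝ) < 1 + r1),
      mul_pos (by linarith : (0:ℝ) < 1 / 2 - r2) (by linarith : (0:ℝ) < 1 + r2),
      mul_pos (by linarith : (0:ℝ) < 1 / 2 - r3) (by linarith : (0:ℝ) < 1 + r3)]
  -- finish
  rcases hcase with h | h | h
  · refine ⟨1, by norm_num, ?_⟩
    have hz : (∑ i, x i * (starRingEnd ℂ) (![1, ω ^ 1, 0] i)) = a + b * ω ^ 2 := by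
      simp [Fin.sum_univ_three, hcω, ← ha', ← hb']
    have hzz : (a + b * ω ^ 2) * (starRingEnd ℂ) (a + b * ω ^ 2)
        = 2 + (u * ω + (starRingEnd ℂ) (u * ω)) := by
      simp only [map_add, map_mul, map_pow, hcω, hu', Complex.conj_conj]
      linear_combination ha + ω ^ 6 * hb + (ω ^ 3 + 1) * hω3
        + a * (starRingEnd ℂ) b * ω * hω3
    rw [hz]
    have hns : (3:ℝ) ≤ Complex.normSq (a + b * ω ^ 2) := by
      have hre := congrArg Complex.re hzz
      rw [Complex.mul_conj] at hre
      simp only [Complex.ofReal_re, Complex.add_re, Complex.conj_re, Complex.re_ofNat] at hre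
      rw [hre]; rw [hr1] at h; linarith
    calc Real.sqrt 3 ≤ Real.sqrt (Complex.normSq (a + b * ω ^ 2)) := Real.sqrt_le_sqrt hns
      _ = ‖a + b * ω ^ 2‖ := (Complex.norm_def _).symm
  · refine ⟨2, by norm_num, ?_⟩
    have hz : (∑ i, x i * (starRingEnd ℂ) (![1, ω ^ 2, 0] i)) = a + b * (ω ^ 2) ^ 2 := by
      simp [Fin.sum_univ_three, hcω, ← ha', ← hb']
    have hzz : (a + b * (ω ^ 2) ^ 2) * (starRingEnd ℂ) (a + b * (ω ^ 2) ^ 2)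
        = 2 + (u * ω ^ 2 + (starRingEnd ℂ) (u * ω ^ 2)) := by
      simp only [map_add, map_mul, map_pow, hcω, hu', Complex.conj_conj]
      linear_combination ha + ω ^ 12 * hb + (ω ^ 9 + ω ^ 6 + ω ^ 3 + 1) * hω3
        + a * (starRingEnd ℂ) b * ω ^ 2 * (ω ^ 3 + 1) * hω3
    rw [hz]
    have hns : (3:ℝ) ≤ Complex.normSq (a + b * (ω ^ 2) ^ 2) := by
      have hre := congrArg Complex.re hzz
      rw [Complex.mul_conj] at hre
      simp only [Complex.ofReal_re, Complex.add_re, Complex.conj_re, Complex.re_ofNat] at hre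
      rw [hre]; rw [hr2] at h; linarith
    calc Real.sqrt 3 ≤ Real.sqrt (Complex.normSq (a + b * (ω ^ 2) ^ 2)) := Real.sqrt_le_sqrt hns
      _ = ‖a + b * (ω ^ 2) ^ 2‖ := (Complex.norm_def _).symm
  · refine ⟨3, by norm_num, ?_⟩
    have hz : (∑ i, x i * (starRingEnd ℂ) (![1, ω ^ 3, 0] i)) = a + b * (ω ^ 2) ^ 3 := by
      simp [Fin.sum_univ_three, hcω, ← ha', ← hb']
    have hzz : (a + b * (ω ^ 2) ^ 3) * (starRingEnd ℂ) (a + b * (ω ^ 2) ^ 3)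
        = 2 + (u * ω ^ 3 + (starRingEnd ℂ) (u * ω ^ 3)) := by
      simp only [map_add, map_mul, map_pow, hcω, hu', Complex.conj_conj]
      linear_combination ha + ω ^ 18 * hb
        + (ω ^ 15 + ω ^ 12 + ω ^ 9 + ω ^ 6 + ω ^ 3 + 1) * hω3
        + a * (starRingEnd ℂ) b * ω ^ 3 * (ω ^ 6 + ω ^ 3 + 1) * hω3
    rw [hz]
    have hns : (3:ℝ) ≤ Complex.normSq (a + b * (ω ^ 2) ^ 3) := by
      have hre := congrArg Complex.re hzz
      rw [Complex.mul_conj] at hre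
      simp only [Complex.ofReal_re, Complex.add_re, Complex.conj_re, Complex.re_ofNat] at hre
      rw [hre]; rw [hr3] at h; linarith
    calc Real.sqrt 3 ≤ Real.sqrt (Complex.normSq (a + b * (ω ^ 2) ^ 3)) := Real.sqrt_le_sqrt hns
      _ = ‖a + b * (ω ^ 2) ^ 3‖ := (Complex.norm_def _).symm
end

section
/- Let ω = exp(2πi/3). For any nonzero vector a = (a₁, a₂, a₃) ∈ ℂ³ with ‖a‖_∞ ≤ 1, there exists a unimodular vector x = (x₁, x₂, x₃) ∈ ℂ³ such that, setting v = (a₁x₁, a₂x₂, a₃x₃), there is at most one pair (k, l) ∈ {0, 1, 2}² with |⟨v, (1, ω^k, ω^l)⟩| > √3. -/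
open Complex Finset

set_option maxHeartbeats 3200000

private lemma cell_le (z : ℂ) (h : Complex.normSq z ≤ 3) : ‖z‖ ≤ Real.sqrt 3 := by
  rw [Complex.norm_def]; exact Real.sqrt_le_sqrt h

private lemma tri_key (x y z : ℝ) (hz : 0 ≤ z)
    (hx1 : x ≤ 1) (hy1 : y ≤ 1) (hz1 : z ≤ 1) (hS : 2 ≤ x + y + z)
    (hQ : 0 ≤ 2*x*y + 2*y*z + 2*z*x - x^2 - y^2 - z^2) :
    (x + y + z - 2)^2 ≤ 3*(2*x*y + 2*y*z + 2*z*x - x^2 - y^2 - z^2) := by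
  nlinarith [mul_nonneg (sub_nonneg.2 hx1) (sub_nonneg.2 hy1),
    mul_nonneg hz (by linarith : (0:ℝ) ≤ x + y + z - 2),
    mul_nonneg (sub_nonneg.2 hz1) (by linarith : (0:ℝ) ≤ x + y + z - 2),
    mul_nonneg (sub_nonneg.2 hx1) hz, mul_nonneg (sub_nonneg.2 hy1) hz,
    hQ, sq_nonneg (x - y)]

private lemma dom_case1 (ω : ℂ) (T : ℝ) (hT2 : T^2 = 3)
    (hw0 : (starRingEnd ℂ) (ω ^ ((0 : Fin 3) : ℕ)) = ((1:ℝ):ℂ) + ((0:ℝ):ℂ) * I)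
    (hw1 : (starRingEnd ℂ) (ω ^ ((1 : Fin 3) : ℕ)) = ((-(1/2):ℝ):ℂ) + ((-(T/2):ℝ):ℂ) * I)
    (hw2 : (starRingEnd ℂ) (ω ^ ((2 : Fin 3) : ℕ)) = ((-(1/2):ℝ):ℂ) + ((T/2:ℝ):ℂ) * I)
    (r1 r2 r3 : ℝ) (h01 : 0 ≤ r1) (h02 : 0 ≤ r2) (h03 : 0 ≤ r3)
    (h11 : r1 ≤ 1) (h12 : r2 ≤ 1) (h13 : r3 ≤ 1) (hdom : r2 + r3 ≤ r1) :
    ∀ k l : Fin 3,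
      ‖((r1 : ℝ) : ℂ) + ((-r2 : ℝ) : ℂ) * (starRingEnd ℂ) (ω ^ (k : ℕ)) +
        ((-r3 : ℝ) : ℂ) * (starRingEnd ℂ) (ω ^ (l : ℕ))‖ ≤ Real.sqrt 3 := by
  have hfin : ∀ m : Fin 3, m = 0 ∨ m = 1 ∨ m = 2 := by decide
  intro k l
  rcases hfin k with hk | hk | hk <;> rcases hfin l with hl | hl | hl <;> subst hk <;> subst hl <;>
    apply cell_le <;>
    simp only [hw0, hw1, hw2] <;>
    simp only [Complex.normSq_apply, Complex.add_re, Complex.add_im, Complex.mul_re,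
      Complex.mul_im, Complex.ofReal_re, Complex.ofReal_im, Complex.I_re, Complex.I_im,
      mul_zero, mul_one, zero_mul, sub_zero, zero_sub, add_zero, zero_add, neg_zero,
      neg_neg, mul_neg, neg_mul] <;>
    nlinarith [mul_nonneg h01 h02, mul_nonneg h02 h03, mul_nonneg h01 h03, hT2,
      sq_nonneg (r1-r2), sq_nonneg (r2-r3), sq_nonneg (r1-r3), sq_nonneg (r2+r3-r1),
      mul_nonneg (mul_nonneg h01 h02) h03]

private lemma dom_case2 (ω : ℂ) (T : ℝ) (hT2 : T^2 = 3)
    (hw0 : (starRingEnd ℂ) (ω ^ ((0 : Fin 3) : ℕ)) = ((1:ℝ):ℂ) + ((0:ℝ):ℂ) * I)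
    (hw1 : (starRingEnd ℂ) (ω ^ ((1 : Fin 3) : ℕ)) = ((-(1/2):ℝ):ℂ) + ((-(T/2):ℝ):ℂ) * I)
    (hw2 : (starRingEnd ℂ) (ω ^ ((2 : Fin 3) : ℕ)) = ((-(1/2):ℝ):ℂ) + ((T/2:ℝ):ℂ) * I)
    (r1 r2 r3 : ℝ) (h01 : 0 ≤ r1) (h02 : 0 ≤ r2) (h03 : 0 ≤ r3)
    (h11 : r1 ≤ 1) (h12 : r2 ≤ 1) (h13 : r3 ≤ 1) (hdom : r1 + r3 ≤ r2) :
    ∀ k l : Fin 3,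
      ‖((-r1 : ℝ) : ℂ) + ((r2 : ℝ) : ℂ) * (starRingEnd ℂ) (ω ^ (k : ℕ)) +
        ((-r3 : ℝ) : ℂ) * (starRingEnd ℂ) (ω ^ (l : ℕ))‖ ≤ Real.sqrt 3 := by
  have hfin : ∀ m : Fin 3, m = 0 ∨ m = 1 ∨ m = 2 := by decide
  intro k l
  rcases hfin k with hk | hk | hk <;> rcases hfin l with hl | hl | hl <;> subst hk <;> subst hl <;>
    apply cell_le <;>
    simp only [hw0, hw1, hw2] <;>
    simp only [Complex.normSq_apply, Complex.add_re, Complex.add_im, Complex.mul_re,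
      Complex.mul_im, Complex.ofReal_re, Complex.ofReal_im, Complex.I_re, Complex.I_im,
      mul_zero, mul_one, zero_mul, sub_zero, zero_sub, add_zero, zero_add, neg_zero,
      neg_neg, mul_neg, neg_mul] <;>
    nlinarith [mul_nonneg h01 h02, mul_nonneg h02 h03, mul_nonneg h01 h03, hT2,
      sq_nonneg (r1-r2), sq_nonneg (r2-r3), sq_nonneg (r1-r3), sq_nonneg (r1+r3-r2),
      mul_nonneg (mul_nonneg h01 h02) h03]

private lemma dom_case3 (ω : ℂ) (T : ℝ) (hT2 : T^2 = 3)
    (hw0 : (starRingEnd ℂ) (ω ^ ((0 : Fin 3) : ℕ)) = ((1:ℝ):ℂ) + ((0:ℝ):ℂ) * I)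
    (hw1 : (starRingEnd ℂ) (ω ^ ((1 : Fin 3) : ℕ)) = ((-(1/2):ℝ):ℂ) + ((-(T/2):ℝ):ℂ) * I)
    (hw2 : (starRingEnd ℂ) (ω ^ ((2 : Fin 3) : ℕ)) = ((-(1/2):ℝ):ℂ) + ((T/2:ℝ):ℂ) * I)
    (r1 r2 r3 : ℝ) (h01 : 0 ≤ r1) (h02 : 0 ≤ r2) (h03 : 0 ≤ r3)
    (h11 : r1 ≤ 1) (h12 : r2 ≤ 1) (h13 : r3 ≤ 1) (hdom : r1 + r2 ≤ r3) :
    ∀ k l : Fin 3,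
      ‖((-r1 : ℝ) : ℂ) + ((-r2 : ℝ) : ℂ) * (starRingEnd ℂ) (ω ^ (k : ℕ)) +
        ((r3 : ℝ) : ℂ) * (starRingEnd ℂ) (ω ^ (l : ℕ))‖ ≤ Real.sqrt 3 := by
  have hfin : ∀ m : Fin 3, m = 0 ∨ m = 1 ∨ m = 2 := by decide
  intro k l
  rcases hfin k with hk | hk | hk <;> rcases hfin l with hl | hl | hl <;> subst hk <;> subst hl <;>
    apply cell_le <;>
    simp only [hw0, hw1, hw2] <;>
    simp only [Complex.normSq_apply, Complex.add_re, Complex.add_im, Complex.mul_re,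
      Complex.mul_im, Complex.ofReal_re, Complex.ofReal_im, Complex.I_re, Complex.I_im,
      mul_zero, mul_one, zero_mul, sub_zero, zero_sub, add_zero, zero_add, neg_zero,
      neg_neg, mul_neg, neg_mul] <;>
    nlinarith [mul_nonneg h01 h02, mul_nonneg h02 h03, mul_nonneg h01 h03, hT2,
      sq_nonneg (r1-r2), sq_nonneg (r2-r3), sq_nonneg (r1-r3), sq_nonneg (r1+r2-r3),
      mul_nonneg (mul_nonneg h01 h02) h03]

private lemma tri_case (ω : ℂ) (T : ℝ) (hT2 : T^2 = 3) (hT0 : 0 ≤ T)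
    (hw0 : (starRingEnd ℂ) (ω ^ ((0 : Fin 3) : ℕ)) = ((1:ℝ):ℂ) + ((0:ℝ):ℂ) * I)
    (hw1 : (starRingEnd ℂ) (ω ^ ((1 : Fin 3) : ℕ)) = ((-(1/2):ℝ):ℂ) + ((-(T/2):ℝ):ℂ) * I)
    (hw2 : (starRingEnd ℂ) (ω ^ ((2 : Fin 3) : ℕ)) = ((-(1/2):ℝ):ℂ) + ((T/2:ℝ):ℂ) * I)
    (r1 r2 r3 b d : ℝ) (h01 : 0 ≤ r1) (h02 : 0 ≤ r2) (h03 : 0 ≤ r3)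
    (h11 : r1 ≤ 1) (h12 : r2 ≤ 1) (h13 : r3 ≤ 1)
    (hb : 2*r1*b = r3^2 - r1^2 - r2^2) (hd0 : 0 ≤ d) (hd2 : d^2 = r2^2 - b^2)
    (hS21 : r1^2 + r2^2 + r3^2 - 2 ≤ 2*T*(r1*d)) :
    ∀ k l : Fin 3, ¬(k = 1 ∧ l = 2) →
      ‖((r1 : ℝ) : ℂ) + (((b : ℝ) : ℂ) + ((d : ℝ) : ℂ) * I) * (starRingEnd ℂ) (ω ^ (k : ℕ)) +
        (((-(r1+b) : ℝ) : ℂ) + ((-d : ℝ) : ℂ) * I) * (starRingEnd ℂ) (ω ^ (l : ℕ))‖ ≤ Real.sqrt 3 := by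
  have hfin : ∀ m : Fin 3, m = 0 ∨ m = 1 ∨ m = 2 := by decide
  intro k l hkl
  rcases hfin k with hk | hk | hk <;> rcases hfin l with hl | hl | hl <;> subst hk <;> subst hl
  rotate_left 5
  · exact absurd ⟨rfl, rfl⟩ hkl
  all_goals
    apply cell_le
    simp only [hw0, hw1, hw2]
    simp only [Complex.normSq_apply, Complex.add_re, Complex.add_im, Complex.mul_re,
      Complex.mul_im, Complex.ofReal_re, Complex.ofReal_im, Complex.I_re, Complex.I_im,
      mul_zero, mul_one, zero_mul, sub_zero, zero_sub, add_zero, zero_add, neg_zero,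
      neg_neg, mul_neg, neg_mul]
    nlinarith [hb, hd2, hd0, hT2, hS21, mul_nonneg h01 h02, mul_nonneg h02 h03,
      mul_nonneg h01 h03, sq_nonneg (r1-r2), sq_nonneg (r2-r3), sq_nonneg (r1-r3),
      mul_nonneg h01 hd0, mul_nonneg (mul_nonneg hT0 h01) hd0]

/-- Let `ω = exp(2πi/3)`. For any nonzero `a ∈ ℂ³` with `‖a‖_∞ ≤ 1` there is a unimodular
`x ∈ ℂ³` such that, with `v = (a₁x₁, a₂x₂, a₃x₃)`, at most one pair `(k, l) ∈ {0,1,2}²`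
satisfies `|⟨v, (1, ω^k, ω^l)⟩| > √3`. -/
theorem stmt_14 (ω : ℂ) (hω : ω = Complex.exp (2 * Real.pi * Complex.I / 3))
    (a : Fin 3 → ℂ) (ha0 : a ≠ 0) (ha : ∀ i, ‖a i‖ ≤ 1) :
    ∃ x : Fin 3 → ℂ, (∀ i, ‖x i‖ = 1) ∧
      ∀ k l k' l' : Fin 3,
        Real.sqrt 3 < ‖(∑ i, (a i * x i) *
          (starRingEnd ℂ) (![1, ω ^ (k : ℕ), ω ^ (l : ℕ)] i))‖ →
        Real.sqrt 3 < ‖(∑ i, (a i * x i) *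
          (starRingEnd ℂ) (![1, ω ^ (k' : ℕ), ω ^ (l' : ℕ)] i))‖ →
        k = k' ∧ l = l' := by
  suffices H : ∃ v : Fin 3 → ℂ, (∀ i, ‖v i‖ = ‖a i‖) ∧
      ∀ k l : Fin 3, ¬(k = 1 ∧ l = 2) →
        ‖v 0 + v 1 * (starRingEnd ℂ) (ω ^ (k : ℕ)) +
          v 2 * (starRingEnd ℂ) (ω ^ (l : ℕ))‖ ≤ Real.sqrt 3 by
    obtain ⟨v, hv, hkey⟩ := H
    refine ⟨fun i => if h : a i = 0 then 1 else v i / a i, ?_, ?_⟩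
    · intro i
      by_cases h : a i = 0
      · simp [h]
      · simp only [h, dif_neg, not_false_iff, map_div₀, norm_div, hv i]
        exact div_self (norm_ne_zero_iff.mpr h)
    · have hax : ∀ i, a i * (if h : a i = 0 then 1 else v i / a i) = v i := by
        intro i
        by_cases h : a i = 0
        · have : ‖v i‖ = 0 := by rw [hv i, h, norm_zero]
          simp [h, norm_eq_zero.mp this]
        · rw [dif_neg h]
          field_simp
      have hsum : ∀ k l : Fin 3, (∑ i, (a i * (if h : a i = 0 then 1 else v i / a i)) *
          (starRingEnd ℂ) (![1, ω ^ (k : ℕ), ω ^ (l : ℕ)] i)) =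
          v 0 + v 1 * (starRingEnd ℂ) (ω ^ (k : ℕ)) + v 2 * (starRingEnd ℂ) (ω ^ (l : ℕ)) := by
        intro k l
        rw [Fin.sum_univ_three]
        simp only [Matrix.cons_val_zero, Matrix.cons_val_one, Matrix.head_cons, map_one, mul_one]
        rw [hax 0, hax 1, hax 2]
        congr 1
      intro k l k' l' h1 h2
      rw [hsum k l] at h1
      rw [hsum k' l'] at h2
      have e1 : k = 1 ∧ l = 2 := by
        by_contra hc; exact absurd h1 (not_lt.2 (hkey k l hc))
      have e2 : k' = 1 ∧ l' = 2 := by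
        by_contra hc; exact absurd h2 (not_lt.2 (hkey k' l' hc))
      exact ⟨e1.1.trans e2.1.symm, e1.2.trans e2.2.symm⟩
  -- setup
  have hT2 : Real.sqrt 3 ^ 2 = 3 := Real.sq_sqrt (by norm_num)
  have hT0 : (0:ℝ) ≤ Real.sqrt 3 := Real.sqrt_nonneg 3
  have hω' : ω = ((-(1/2) : ℝ) : ℂ) + ((Real.sqrt 3 / 2 : ℝ) : ℂ) * I := by
    rw [hω]
    have h23 : (2 * ↑Real.pi * I / 3 : ℂ) = ((2 * Real.pi / 3 : ℝ) : ℂ) * I := by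
      push_cast; ring
    rw [h23, Complex.exp_mul_I, ← Complex.ofReal_cos, ← Complex.ofReal_sin]
    have hcos : Real.cos (2 * Real.pi / 3) = -(1/2) := by
      have h : 2 * Real.pi / 3 = Real.pi - Real.pi / 3 := by ring
      rw [h, Real.cos_pi_sub, Real.cos_pi_div_three]
    have hsin : Real.sin (2 * Real.pi / 3) = Real.sqrt 3 / 2 := by
      have h : 2 * Real.pi / 3 = Real.pi - Real.pi / 3 := by ring
      rw [h, Real.sin_pi_sub, Real.sin_pi_div_three]
    rw [hcos, hsin]
  have hc1 : (starRingEnd ℂ) ω = ((-(1/2):ℝ):ℂ) + ((-(Real.sqrt 3/2):ℝ):ℂ) * I := by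
    rw [hω']
    rw [map_add, map_mul, Complex.conj_ofReal, Complex.conj_ofReal, Complex.conj_I]
    push_cast
    ring
  have hc2 : (starRingEnd ℂ) (ω ^ 2) = ((-(1/2):ℝ):ℂ) + ((Real.sqrt 3/2:ℝ):ℂ) * I := by
    rw [map_pow, hc1]
    have hTc : ((Real.sqrt 3 : ℝ) : ℂ)^2 = 3 := by
      rw [← Complex.ofReal_pow, hT2]; norm_num
    push_cast
    linear_combination (-(1/4) : ℂ) * hTc + (((Real.sqrt 3 : ℝ):ℂ)^2/4) * Complex.I_sq
  have hw0 : (starRingEnd ℂ) (ω ^ ((0 : Fin 3) : ℕ)) = ((1:ℝ):ℂ) + ((0:ℝ):ℂ) * I := by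
    norm_num
  have hw1 : (starRingEnd ℂ) (ω ^ ((1 : Fin 3) : ℕ)) =
      ((-(1/2):ℝ):ℂ) + ((-(Real.sqrt 3/2):ℝ):ℂ) * I := by
    rw [show ((1 : Fin 3) : ℕ) = 1 from rfl, pow_one, hc1]
  have hw2 : (starRingEnd ℂ) (ω ^ ((2 : Fin 3) : ℕ)) =
      ((-(1/2):ℝ):ℂ) + ((Real.sqrt 3/2:ℝ):ℂ) * I := by
    rw [show ((2 : Fin 3) : ℕ) = 2 from rfl, hc2]
  have hfin : ∀ m : Fin 3, m = 0 ∨ m = 1 ∨ m = 2 := by decide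
  have h01 : 0 ≤ ‖a 0‖ := norm_nonneg _
  have h02 : 0 ≤ ‖a 1‖ := norm_nonneg _
  have h03 : 0 ≤ ‖a 2‖ := norm_nonneg _
  have h11 : ‖a 0‖ ≤ 1 := ha 0
  have h12 : ‖a 1‖ ≤ 1 := ha 1
  have h13 : ‖a 2‖ ≤ 1 := ha 2
  rcases le_or_gt (‖a 1‖ + ‖a 2‖) (‖a 0‖) with hdom1 | hnd1
  · refine ⟨![((‖a 0‖ : ℝ) : ℂ), ((-‖a 1‖ : ℝ) : ℂ),
        ((-‖a 2‖ : ℝ) : ℂ)], ?_, ?_⟩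
    · intro i
      rcases hfin i with hi | hi | hi <;> subst hi <;>
        simp [Complex.norm_real, Real.norm_eq_abs, abs_neg, _root_.abs_of_nonneg, h01, h02, h03]
    · intro k l _
      have := dom_case1 ω (Real.sqrt 3) hT2 hw0 hw1 hw2 _ _ _ h01 h02 h03 h11 h12 h13 hdom1 k l
      simpa using this
  · rcases le_or_gt (‖a 0‖ + ‖a 2‖) (‖a 1‖) with hdom2 | hnd2
    · refine ⟨![((-‖a 0‖ : ℝ) : ℂ), ((‖a 1‖ : ℝ) : ℂ),
          ((-‖a 2‖ : ℝ) : ℂ)], ?_, ?_⟩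
      · intro i
        rcases hfin i with hi | hi | hi <;> subst hi <;>
          simp [Complex.norm_real, Real.norm_eq_abs, abs_neg, _root_.abs_of_nonneg, h01, h02, h03]
      · intro k l _
        have := dom_case2 ω (Real.sqrt 3) hT2 hw0 hw1 hw2 _ _ _ h01 h02 h03 h11 h12 h13 hdom2 k l
        simpa using this
    · rcases le_or_gt (‖a 0‖ + ‖a 1‖) (‖a 2‖) with hdom3 | hnd3
      · refine ⟨![((-‖a 0‖ : ℝ) : ℂ), ((-‖a 1‖ : ℝ) : ℂ),
            ((‖a 2‖ : ℝ) : ℂ)], ?_, ?_⟩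
        · intro i
          rcases hfin i with hi | hi | hi <;> subst hi <;>
            simp [Complex.norm_real, Real.norm_eq_abs, abs_neg, _root_.abs_of_nonneg, h01, h02, h03]
        · intro k l _
          have := dom_case3 ω (Real.sqrt 3) hT2 hw0 hw1 hw2 _ _ _ h01 h02 h03 h11 h12 h13 hdom3 k l
          simpa using this
      · -- triangle case
        set r1 : ℝ := ‖a 0‖ with hr1
        set r2 : ℝ := ‖a 1‖ with hr2
        set r3 : ℝ := ‖a 2‖ with hr3
        have hr1pos : 0 < r1 := by
          rcases h01.lt_or_eq with h | h
          · exact h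
          · exfalso; rw [← h] at hnd2 hnd3; linarith
        set b : ℝ := (r3^2 - r1^2 - r2^2) / (2*r1) with hbdef
        have hb : 2*r1*b = r3^2 - r1^2 - r2^2 := by
          rw [hbdef]; field_simp [hr1pos.ne']
        have hbb : b^2 ≤ r2^2 := by
          have key : 0 < ((r1+r2)^2 - r3^2) * (r3^2 - (r1-r2)^2) := by
            apply mul_pos <;> nlinarith
          nlinarith [key, hb, sq_nonneg b, mul_pos hr1pos hr1pos]
        set d : ℝ := Real.sqrt (r2^2 - b^2) with hddef
        have hd0 : 0 ≤ d := Real.sqrt_nonneg _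
        have hd2 : d^2 = r2^2 - b^2 := Real.sq_sqrt (by linarith)
        have hS21 : r1^2 + r2^2 + r3^2 - 2 ≤ 2*(Real.sqrt 3)*(r1*d) := by
          rcases le_or_gt (r1^2 + r2^2 + r3^2) 2 with h | h
          · have : 0 ≤ 2*(Real.sqrt 3)*(r1*d) := by positivity
            linarith
          · have h12d : 12*(r1*d)^2 = 3*(2*(r1^2)*(r2^2) + 2*(r2^2)*(r3^2) + 2*(r3^2)*(r1^2)
                - (r1^2)^2 - (r2^2)^2 - (r3^2)^2) := by
              nlinarith [hd2, hb]
            have hQ0 : 0 ≤ 2*(r1^2)*(r2^2) + 2*(r2^2)*(r3^2) + 2*(r3^2)*(r1^2)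
                - (r1^2)^2 - (r2^2)^2 - (r3^2)^2 := by nlinarith [sq_nonneg (r1*d)]
            have hkey2 := tri_key (r1^2) (r2^2) (r3^2) (sq_nonneg r3)
              (by nlinarith) (by nlinarith) (by nlinarith) (by linarith) hQ0
            nlinarith [hkey2, h12d, hT2, mul_nonneg h01 hd0, hT0,
              mul_nonneg (mul_nonneg hT0 h01) hd0]
        refine ⟨![((r1 : ℝ) : ℂ), ((b : ℝ) : ℂ) + ((d : ℝ) : ℂ) * I,
            ((-(r1+b) : ℝ) : ℂ) + ((-d : ℝ) : ℂ) * I], ?_, ?_⟩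
        · intro i
          rcases hfin i with hi | hi | hi <;> subst hi
          · simp [Complex.norm_real, Real.norm_eq_abs, _root_.abs_of_nonneg, h01, hr1]
          · simp only [Matrix.cons_val_one, Matrix.head_cons, Matrix.cons_val_zero]
            rw [← hr2, Complex.norm_add_mul_I, show b^2 + d^2 = r2^2 by nlinarith [hd2]]
            exact Real.sqrt_sq h02
          · simp only [Matrix.cons_val_two, Matrix.tail_cons, Matrix.head_cons, Matrix.cons_val_one, Matrix.cons_val_zero]
            rw [← hr3, Complex.norm_add_mul_I, show (-(r1+b))^2 + (-d)^2 = r3^2 by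
              nlinarith [hd2, hb]]
            exact Real.sqrt_sq h03
        · intro k l hkl
          have := tri_case ω (Real.sqrt 3) hT2 hT0 hw0 hw1 hw2 r1 r2 r3 b d
            h01 h02 h03 h11 h12 h13 hb hd0 hd2 hS21 k l hkl
          simpa using this
end

section
/- Let ω = exp(2πi/3) and let a = (a₁, a₂, a₃) ∈ ℂ³ be a vector with ‖a‖_∞ ≤ 1 such that |⟨a, (1, ω^k, 1)⟩| > √3 for every k ∈ {0, 1, 2}. Then |a₂| < 1. -/
open Complex Finset

/-- Let `ω = exp(2πi/3)` and `a ∈ ℂ³` with `‖a‖_∞ ≤ 1` be such that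
`|⟨a, (1, ω^k, 1)⟩| > √3` for every `k ∈ {0, 1, 2}`. Then `|a₂| < 1`. -/

theorem stmt_15 (ω : ℂ) (hω : ω = Complex.exp (2 * Real.pi * Complex.I / 3))
    (a : Fin 3 → ℂ) (ha : ∀ i, ‖a i‖ ≤ 1)
    (h : ∀ k : Fin 3,
      Real.sqrt 3 < ‖∑ i, a i * (starRingEnd ℂ) (![1, ω ^ (k : ℕ), 1] i)‖) :
    ‖a 1‖ < 1 := by
  by_contra h1
  push_neg at h1
  have ha1 : ‖a 1‖ = 1 := le_antisymm (ha 1) h1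
  -- root of unity facts
  have hprim : IsPrimitiveRoot ω 3 := by
    rw [hω]; exact_mod_cast Complex.isPrimitiveRoot_exp 3 (by norm_num)
  have hω3 : ω ^ 3 = 1 := hprim.pow_eq_one
  have hωsum : 1 + ω + ω ^ 2 = 0 := by
    have := hprim.geom_sum_eq_zero (by norm_num)
    simpa [Finset.sum_range_succ] using this
  have habs1 : ‖ω‖ = 1 := by
    rw [hω, Complex.norm_exp]
    norm_num
  set s : ℂ := a 0 + a 2 with hs
  set z : ℂ := s * (starRingEnd ℂ) (a 1) with hz
  set r : ℝ := ‖s‖ with hrdef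
  have hr0 : 0 ≤ r := norm_nonneg s
  have hr2 : r ≤ 2 := by
    calc r ≤ ‖a 0‖ + ‖a 2‖ := norm_add_le _ _
    _ ≤ 2 := by have := ha 0; have := ha 2; linarith
  have hnz : Complex.normSq z = r ^ 2 := by
    rw [hz, Complex.normSq_mul, Complex.normSq_conj, ← Complex.sq_norm, ← Complex.sq_norm, ha1]
    simp [hrdef]
  set x : Fin 3 → ℝ := fun k => (z * ω ^ (k : ℕ)).re with hx
  have key : ∀ k : Fin 3, 3 < r ^ 2 + 1 + 2 * x k := by
    intro k
    have h1 := h k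
    simp only [Fin.sum_univ_three, Matrix.cons_val_zero, Matrix.cons_val_one, Matrix.head_cons,
      Matrix.cons_val_two, Matrix.tail_cons, map_one, mul_one] at h1
    have hsq : Real.sqrt 3 ^ 2 < ‖a 0 + a 1 * (starRingEnd ℂ) (ω ^ (k:ℕ)) + a 2‖ ^ 2 := by
      apply pow_lt_pow_left₀ h1 (Real.sqrt_nonneg 3)
      norm_num
    rw [Real.sq_sqrt (by norm_num : (3:ℝ) ≥ 0), Complex.sq_norm] at hsq
    have heq : a 0 + a 1 * (starRingEnd ℂ) (ω ^ (k:ℕ)) + a 2 = s + a 1 * (starRingEnd ℂ) (ω ^ (k:ℕ)) := by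
      rw [hs]; ring
    rw [heq, Complex.normSq_add] at hsq
    have h2 : Complex.normSq (a 1 * (starRingEnd ℂ) (ω ^ (k:ℕ))) = 1 := by
      rw [Complex.normSq_mul, Complex.normSq_conj, ← Complex.sq_norm, ← Complex.sq_norm, ha1,
        norm_pow, habs1]
      norm_num
    have h3 : (s * (starRingEnd ℂ) (a 1 * (starRingEnd ℂ) (ω ^ (k:ℕ)))).re = x k := by
      rw [hx]
      congr 1
      rw [map_mul, Complex.conj_conj, hz]
      ring
    rw [h2, h3] at hsq
    have h4 : Complex.normSq s = r ^ 2 := by rw [← Complex.sq_norm]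
    rw [h4] at hsq
    linarith
  have e0 : ((0:Fin 3):ℕ) = 0 := rfl
  have e1 : ((1:Fin 3):ℕ) = 1 := rfl
  have e2 : ((2:Fin 3):ℕ) = 2 := rfl
  have hS1 : x 0 + x 1 + x 2 = 0 := by
    have hc : z * ω ^ ((0:Fin 3):ℕ) + z * ω ^ ((1:Fin 3):ℕ) + z * ω ^ ((2:Fin 3):ℕ) = 0 := by
      rw [e0, e1, e2]
      linear_combination z * hωsum
    calc x 0 + x 1 + x 2
        = (z * ω ^ ((0:Fin 3):ℕ) + z * ω ^ ((1:Fin 3):ℕ) + z * ω ^ ((2:Fin 3):ℕ)).re := by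
          simp [hx]
    _ = 0 := by rw [hc]; simp
  have hre : ∀ w : ℂ, w.re ^ 2 = (Complex.normSq w + (w ^ 2).re) / 2 := by
    intro w
    simp only [pow_two]
    rw [Complex.mul_re, Complex.normSq_apply]
    ring
  have hS2 : x 0 ^ 2 + x 1 ^ 2 + x 2 ^ 2 = 3 / 2 * r ^ 2 := by
    have hz2 : (z * ω ^ ((0:Fin 3):ℕ)) ^ 2 + (z * ω ^ ((1:Fin 3):ℕ)) ^ 2
        + (z * ω ^ ((2:Fin 3):ℕ)) ^ 2 = 0 := by
      rw [e0, e1, e2]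
      linear_combination z ^ 2 * hωsum + z ^ 2 * ω * hω3
    have hn : ∀ k : Fin 3, Complex.normSq (z * ω ^ (k:ℕ)) = r ^ 2 := by
      intro k
      rw [Complex.normSq_mul, hnz, ← Complex.sq_norm, norm_pow, habs1]
      norm_num
    have hre2 : ((z * ω ^ ((0:Fin 3):ℕ)) ^ 2).re + ((z * ω ^ ((1:Fin 3):ℕ)) ^ 2).re
        + ((z * ω ^ ((2:Fin 3):ℕ)) ^ 2).re = 0 := by
      rw [← Complex.add_re, ← Complex.add_re, hz2, Complex.zero_re]
    have hn0 := hn 0; have hn1 := hn 1; have hn2 := hn 2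
    simp only [hx]
    linarith [hre (z * ω ^ ((0:Fin 3):ℕ)), hre (z * ω ^ ((1:Fin 3):ℕ)),
      hre (z * ω ^ ((2:Fin 3):ℕ))]
  have hlb : ∀ k : Fin 3, -(r/2) < x k := by
    intro k
    have := key k
    nlinarith [hr2, hr0]
  have hl0 := hlb 0
  have hl1 := hlb 1
  have hl2 := hlb 2
  have hub0 : x 0 < r := by linarith
  have hub1 : x 1 < r := by linarith
  have hub2 : x 2 < r := by linarith
  nlinarith [mul_pos (by linarith : 0 < x 0 + r/2) (by linarith : 0 < r - x 0),
    mul_pos (by linarith : 0 < x 1 + r/2) (by linarith : 0 < r - x 1),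
    mul_pos (by linarith : 0 < x 2 + r/2) (by linarith : 0 < r - x 2),
    hS1, hS2]
end

section
/- Let ω = exp(2πi/3). For every vector a ∈ ℂ³ with ‖a‖_∞ ≤ 1, at least one of the four unimodular vectors (1, ω, 1), (1, ω², 1), (1, 1, ω), (1, 1, ω²) ∈ ℂ³, call it y, satisfies |⟨a, y⟩| ≤ √3. -/
set_option maxHeartbeats 2000000

private lemma aux_sqlt (c p : ℝ) (hc : 0 < c) (hp : 0 < p) (hs : c*c < p*p) : c < p := by
  nlinarith

private lemma core (m w A1 B1 A2 B2 : ℝ) (hm : 0 < m) (hw : w^2 = 3)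
    (e1 : m < A1^2 + B1^2)
    (e1' : m < A1^2 + (B1 + w*m/3)^2)
    (b1 : (A1 + m/2)^2 + (B1 + w*m/6)^2 ≤ m)
    (e2 : m < A2^2 + B2^2)
    (e2' : m < A2^2 + (B2 - w*m/3)^2)
    (b2 : (A2 + m/2)^2 + (B2 - w*m/6)^2 ≤ m)
    (d : (A1+A2)^2 + (B1+B2)^2 ≤ m) : False := by
  rw [show (A1 + m/2)^2 + (B1 + w*m/6)^2
      = A1^2+B1^2 + m*A1 + w*m*B1/3 + m^2/3 by linear_combination (m^2/36)*hw] at b1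
  rw [show A1^2 + (B1 + w*m/3)^2 = A1^2+B1^2 + 2*(w*m*B1/3) + m^2/3 by
      linear_combination (m^2/9)*hw] at e1'
  rw [show (A2 + m/2)^2 + (B2 - w*m/6)^2
      = A2^2+B2^2 + m*A2 - w*m*B2/3 + m^2/3 by linear_combination (m^2/36)*hw] at b2
  rw [show A2^2 + (B2 - w*m/3)^2 = A2^2+B2^2 - 2*(w*m*B2/3) + m^2/3 by
      linear_combination (m^2/9)*hw] at e2'
  have i1 : m*A1 + w*m*B1/3 + m^2/3 < 0 := by linarith only [b1, e1]
  have i3 : m*A1 < w*m*B1/3 := by linarith only [b1, e1']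
  have i2 : m*A2 - w*m*B2/3 + m^2/3 < 0 := by linarith only [b2, e2]
  have i4 : m*A2 < -(w*m*B2/3) := by linarith only [b2, e2']
  have l1 : 3*A1 + w*B1 + m < 0 := by
    by_contra h
    push_neg at h
    have h' := mul_nonneg hm.le h
    have hr : m*(3*A1 + w*B1 + m) = 3*(m*A1) + 3*(w*m*B1/3) + m^2 := by ring
    rw [hr] at h'
    linarith only [h', i1]
  have l3 : 3*A1 < w*B1 := by
    by_contra h
    push_neg at h
    have h' := mul_nonneg hm.le (by linarith only [h] : (0:ℝ) ≤ 3*A1 - w*B1)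
    have hr : m*(3*A1 - w*B1) = 3*(m*A1) - 3*(w*m*B1/3) := by ring
    rw [hr] at h'
    linarith only [h', i3]
  have l2 : 3*A2 - w*B2 + m < 0 := by
    by_contra h
    push_neg at h
    have h' := mul_nonneg hm.le h
    have hr : m*(3*A2 - w*B2 + m) = 3*(m*A2) - 3*(w*m*B2/3) + m^2 := by ring
    rw [hr] at h'
    linarith only [h', i2]
  have l4 : 3*A2 < -(w*B2) := by
    by_contra h
    push_neg at h
    have h' := mul_nonneg hm.le (by linarith only [h] : (0:ℝ) ≤ 3*A2 + w*B2)
    have hr : m*(3*A2 + w*B2) = 3*(m*A2) + 3*(w*m*B2/3) := by ring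
    rw [hr] at h'
    linarith only [h', i4]
  have hA1neg : A1 < 0 := by linarith only [l1, l3, hm]
  have hA2neg : A2 < 0 := by linarith only [l2, l4, hm]
  have hq1id : (-(3*A1+w*B1))*(w*B1-3*A1) = 9*A1^2 - 3*B1^2 := by
    linear_combination (-(B1^2))*hw
  have hq1pos : (0:ℝ) < (-(3*A1+w*B1))*(w*B1-3*A1) :=
    mul_pos (by linarith only [l1, hm]) (by linarith only [l3])
  rw [hq1id] at hq1pos
  have q1 : m/4 < A1^2 := by linarith only [hq1pos, e1]
  have hq2id : (-(3*A2-w*B2))*(-(w*B2)-3*A2) = 9*A2^2 - 3*B2^2 := by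
    linear_combination (-(B2^2))*hw
  have hq2pos : (0:ℝ) < (-(3*A2-w*B2))*(-(w*B2)-3*A2) :=
    mul_pos (by linarith only [l2, hm]) (by linarith only [l4])
  rw [hq2id] at hq2pos
  have q2 : m/4 < A2^2 := by linarith only [hq2pos, e2]
  have hp : 0 < A1*A2 := by
    have h := mul_pos (neg_pos.2 hA1neg) (neg_pos.2 hA2neg)
    have hr : (-A1)*(-A2) = A1*A2 := by ring
    rw [hr] at h
    exact h
  have hs : (m/4)*(m/4) < (A1*A2)*(A1*A2) := by
    have h := mul_lt_mul'' q1 q2 (by linarith only [hm]) (by linarith only [hm])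
    have hr : A1^2*A2^2 = (A1*A2)*(A1*A2) := by ring
    rw [hr] at h
    exact h
  have q12 : m/4 < A1*A2 := aux_sqlt (m/4) (A1*A2) (by linarith only [hm]) hp hs
  linarith only [d, sq_nonneg (B1+B2), q12, q1, q2]

private lemma main_real (w x0 y0 x1 y1 x2 y2 : ℝ) (hw : w^2 = 3)
    (h0 : x0^2+y0^2 ≤ 1) (h1 : x1^2+y1^2 ≤ 1) (h2 : x2^2+y2^2 ≤ 1)
    (hn1 : 3 < (x0+x2-x1/2+w*y1/2)^2+(y0+y2-y1/2-w*x1/2)^2)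
    (hn2 : 3 < (x0+x2-x1/2-w*y1/2)^2+(y0+y2-y1/2+w*x1/2)^2)
    (hn3 : 3 < (x0+x1-x2/2+w*y2/2)^2+(y0+y1-y2/2-w*x2/2)^2)
    (hn4 : 3 < (x0+x1-x2/2-w*y2/2)^2+(y0+y1-y2/2+w*x2/2)^2) : False := by
  have hm0 : (0:ℝ) ≤ (x0+x1+x2)^2 + (y0+y1+y2)^2 := by positivity
  rcases hm0.lt_or_eq with hm | hm
  · -- m > 0
    refine core ((x0+x1+x2)^2 + (y0+y1+y2)^2) w
      ((x0+x1+x2)*x1+(y0+y1+y2)*y1 - ((x0+x1+x2)^2 + (y0+y1+y2)^2)/2)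
      ((y0+y1+y2)*x1-(x0+x1+x2)*y1 - w*((x0+x1+x2)^2 + (y0+y1+y2)^2)/6)
      ((x0+x1+x2)*x2+(y0+y1+y2)*y2 - ((x0+x1+x2)^2 + (y0+y1+y2)^2)/2)
      ((y0+y1+y2)*x2-(x0+x1+x2)*y2 + w*((x0+x1+x2)^2 + (y0+y1+y2)^2)/6)
      hm hw ?_ ?_ ?_ ?_ ?_ ?_ ?_
    · -- e1 from hn1
      have h := mul_lt_mul_of_pos_left hn1 hm
      have hid : ((x0+x1+x2)^2 + (y0+y1+y2)^2) *
          ((x0+x2-x1/2+w*y1/2)^2+(y0+y2-y1/2-w*x1/2)^2)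
          = 3*(((x0+x1+x2)*x1+(y0+y1+y2)*y1 - ((x0+x1+x2)^2 + (y0+y1+y2)^2)/2)^2
            + ((y0+y1+y2)*x1-(x0+x1+x2)*y1 - w*((x0+x1+x2)^2 + (y0+y1+y2)^2)/6)^2) := by
        linear_combination ((-1/12)*y2^4 + (-1/6)*x2^2*y2^2 + (-1/12)*x2^4 + (-1/3)*y1*y2^3 + (-1/3)*y1*x2^2*y2 + (-1/4)*y1^2*y2^2 + (1/12)*y1^2*x2^2 + (1/6)*y1^3*y2 + (1/6)*y1^4 + (-1/3)*x1*x2*y2^2 + (-1/3)*x1*x2^3 + (-2/3)*x1*y1*x2*y2 + (1/6)*x1*y1^2*x2 + (1/12)*x1^2*y2^2 + (-1/4)*x1^2*x2^2 + (1/6)*x1^2*y1*y2 + (1/3)*x1^2*y1^2 + (1/6)*x1^3*x2 + (1/6)*x1^4 + (-1/3)*y0*y2^3 + (-1/3)*y0*x2^2*y2 + (-1/1)*y0*y1*y2^2 + (-1/3)*y0*y1*x2^2 + (-1/2)*y0*y1^2*y2 + (1/6)*y0*y1^3 + (-2/3)*y0*x1*x2*y2 + (-2/3)*y0*x1*y1*x2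 + (1/6)*y0*x1^2*y2 + (1/6)*y0*x1^2*y1 + (-1/2)*y0^2*y2^2 + (-1/6)*y0^2*x2^2 + (-1/1)*y0^2*y1*y2 + (-1/4)*y0^2*y1^2 + (-1/3)*y0^2*x1*x2 + (1/12)*y0^2*x1^2 + (-1/3)*y0^3*y2 + (-1/3)*y0^3*y1 + (-1/12)*y0^4 + (-1/3)*x0*x2*y2^2 + (-1/3)*x0*x2^3 + (-2/3)*x0*y1*x2*y2 + (1/6)*x0*y1^2*x2 + (-1/3)*x0*x1*y2^2 + (-1/1)*x0*x1*x2^2 + (-2/3)*x0*x1*y1*y2 + (1/6)*x0*x1*y1^2 + (-1/2)*x0*x1^2*x2 + (1/6)*x0*x1^3 + (-2/3)*x0*y0*x2*y2 + (-2/3)*x0*y0*y1*x2 + (-2/3)*x0*y0*x1*y2 + (-2/3)*x0*y0*x1*y1 + (-1/3)*x0*y0^2*x2 + (-1/3)*x0*y0^2*x1 + (-1/6)*x0^2*y2^2 + (-1/2)*x0^2*x2^2 + (-1/3)*x0^2*y1*y2 + (1/12)*x0^2*y1^2 + (-1/1)*x0^2*x1*x2 + (-1/4)*x0^2*x1^2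 + (-1/3)*x0^2*y0*y2 + (-1/3)*x0^2*y0*y1 + (-1/6)*x0^2*y0^2 + (-1/3)*x0^3*x2 + (-1/3)*x0^3*x1 + (-1/12)*x0^4) * hw
      rw [hid] at h
      linarith
    · -- e1' from hn2
      have h := mul_lt_mul_of_pos_left hn2 hm
      have hid : ((x0+x1+x2)^2 + (y0+y1+y2)^2) *
          ((x0+x2-x1/2-w*y1/2)^2+(y0+y2-y1/2+w*x1/2)^2)
          = 3*(((x0+x1+x2)*x1+(y0+y1+y2)*y1 - ((x0+x1+x2)^2 + (y0+y1+y2)^2)/2)^2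
            + (((y0+y1+y2)*x1-(x0+x1+x2)*y1 - w*((x0+x1+x2)^2 + (y0+y1+y2)^2)/6)
               + w*((x0+x1+x2)^2 + (y0+y1+y2)^2)/3)^2) := by
        linear_combination ((-1/12)*y2^4 + (-1/6)*x2^2*y2^2 + (-1/12)*x2^4 + (-1/3)*y1*y2^3 + (-1/3)*y1*x2^2*y2 + (-1/4)*y1^2*y2^2 + (1/12)*y1^2*x2^2 + (1/6)*y1^3*y2 + (1/6)*y1^4 + (-1/3)*x1*x2*y2^2 + (-1/3)*x1*x2^3 + (-2/3)*x1*y1*x2*y2 + (1/6)*x1*y1^2*x2 + (1/12)*x1^2*y2^2 + (-1/4)*x1^2*x2^2 + (1/6)*x1^2*y1*y2 + (1/3)*x1^2*y1^2 + (1/6)*x1^3*x2 + (1/6)*x1^4 + (-1/3)*y0*y2^3 + (-1/3)*y0*x2^2*y2 + (-1/1)*y0*y1*y2^2 + (-1/3)*y0*y1*x2^2 + (-1/2)*y0*y1^2*y2 + (1/6)*y0*y1^3 + (-2/3)*y0*x1*x2*y2 + (-2/3)*y0*x1*y1*x2 + (1/6)*y0*x1^2*y2 + (1/6)*y0*x1^2*y1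 + (-1/2)*y0^2*y2^2 + (-1/6)*y0^2*x2^2 + (-1/1)*y0^2*y1*y2 + (-1/4)*y0^2*y1^2 + (-1/3)*y0^2*x1*x2 + (1/12)*y0^2*x1^2 + (-1/3)*y0^3*y2 + (-1/3)*y0^3*y1 + (-1/12)*y0^4 + (-1/3)*x0*x2*y2^2 + (-1/3)*x0*x2^3 + (-2/3)*x0*y1*x2*y2 + (1/6)*x0*y1^2*x2 + (-1/3)*x0*x1*y2^2 + (-1/1)*x0*x1*x2^2 + (-2/3)*x0*x1*y1*y2 + (1/6)*x0*x1*y1^2 + (-1/2)*x0*x1^2*x2 + (1/6)*x0*x1^3 + (-2/3)*x0*y0*x2*y2 + (-2/3)*x0*y0*y1*x2 + (-2/3)*x0*y0*x1*y2 + (-2/3)*x0*y0*x1*y1 + (-1/3)*x0*y0^2*x2 + (-1/3)*x0*y0^2*x1 + (-1/6)*x0^2*y2^2 + (-1/2)*x0^2*x2^2 + (-1/3)*x0^2*y1*y2 + (1/12)*x0^2*y1^2 + (-1/1)*x0^2*x1*x2 + (-1/4)*x0^2*x1^2 + (-1/3)*x0^2*y0*y2 + (-1/3)*x0^2*y0*y1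 + (-1/6)*x0^2*y0^2 + (-1/3)*x0^3*x2 + (-1/3)*x0^3*x1 + (-1/12)*x0^4) * hw
      rw [hid] at h
      linarith
    · -- b1
      have hid : (((x0+x1+x2)*x1+(y0+y1+y2)*y1 - ((x0+x1+x2)^2 + (y0+y1+y2)^2)/2)
            + ((x0+x1+x2)^2 + (y0+y1+y2)^2)/2)^2
          + (((y0+y1+y2)*x1-(x0+x1+x2)*y1 - w*((x0+x1+x2)^2 + (y0+y1+y2)^2)/6)
            + w*((x0+x1+x2)^2 + (y0+y1+y2)^2)/6)^2
          = ((x0+x1+x2)^2 + (y0+y1+y2)^2)*(x1^2+y1^2) := by ring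
      rw [hid]
      calc ((x0+x1+x2)^2 + (y0+y1+y2)^2)*(x1^2+y1^2)
          ≤ ((x0+x1+x2)^2 + (y0+y1+y2)^2)*1 := by
            exact mul_le_mul_of_nonneg_left h1 hm.le
        _ = (x0+x1+x2)^2 + (y0+y1+y2)^2 := by ring
    · -- e2 from hn4
      have h := mul_lt_mul_of_pos_left hn4 hm
      have hid : ((x0+x1+x2)^2 + (y0+y1+y2)^2) *
          ((x0+x1-x2/2-w*y2/2)^2+(y0+y1-y2/2+w*x2/2)^2)
          = 3*(((x0+x1+x2)*x2+(y0+y1+y2)*y2 - ((x0+x1+x2)^2 + (y0+y1+y2)^2)/2)^2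
            + ((y0+y1+y2)*x2-(x0+x1+x2)*y2 + w*((x0+x1+x2)^2 + (y0+y1+y2)^2)/6)^2) := by
        linear_combination ((1/6)*y2^4 + (1/3)*x2^2*y2^2 + (1/6)*x2^4 + (1/6)*y1*y2^3 + (1/6)*y1*x2^2*y2 + (-1/4)*y1^2*y2^2 + (1/12)*y1^2*x2^2 + (-1/3)*y1^3*y2 + (-1/12)*y1^4 + (1/6)*x1*x2*y2^2 + (1/6)*x1*x2^3 + (-2/3)*x1*y1*x2*y2 + (-1/3)*x1*y1^2*x2 + (1/12)*x1^2*y2^2 + (-1/4)*x1^2*x2^2 + (-1/3)*x1^2*y1*y2 + (-1/6)*x1^2*y1^2 + (-1/3)*x1^3*x2 + (-1/12)*x1^4 + (1/6)*y0*y2^3 + (1/6)*y0*x2^2*y2 + (-1/2)*y0*y1*y2^2 + (1/6)*y0*y1*x2^2 + (-1/1)*y0*y1^2*y2 + (-1/3)*y0*y1^3 + (-2/3)*y0*x1*x2*y2 + (-2/3)*y0*x1*y1*x2 + (-1/3)*y0*x1^2*y2 + (-1/3)*y0*x1^2*y1 + (-1/4)*y0^2*y2^2 + (1/12)*y0^2*x2^2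 + (-1/1)*y0^2*y1*y2 + (-1/2)*y0^2*y1^2 + (-1/3)*y0^2*x1*x2 + (-1/6)*y0^2*x1^2 + (-1/3)*y0^3*y2 + (-1/3)*y0^3*y1 + (-1/12)*y0^4 + (1/6)*x0*x2*y2^2 + (1/6)*x0*x2^3 + (-2/3)*x0*y1*x2*y2 + (-1/3)*x0*y1^2*x2 + (1/6)*x0*x1*y2^2 + (-1/2)*x0*x1*x2^2 + (-2/3)*x0*x1*y1*y2 + (-1/3)*x0*x1*y1^2 + (-1/1)*x0*x1^2*x2 + (-1/3)*x0*x1^3 + (-2/3)*x0*y0*x2*y2 + (-2/3)*x0*y0*y1*x2 + (-2/3)*x0*y0*x1*y2 + (-2/3)*x0*y0*x1*y1 + (-1/3)*x0*y0^2*x2 + (-1/3)*x0*y0^2*x1 + (1/12)*x0^2*y2^2 + (-1/4)*x0^2*x2^2 + (-1/3)*x0^2*y1*y2 + (-1/6)*x0^2*y1^2 + (-1/1)*x0^2*x1*x2 + (-1/2)*x0^2*x1^2 + (-1/3)*x0^2*y0*y2 + (-1/3)*x0^2*y0*y1 + (-1/6)*x0^2*y0^2 + (-1/3)*x0^3*x2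 + (-1/3)*x0^3*x1 + (-1/12)*x0^4) * hw
      rw [hid] at h
      linarith
    · -- e2' from hn3
      have h := mul_lt_mul_of_pos_left hn3 hm
      have hid : ((x0+x1+x2)^2 + (y0+y1+y2)^2) *
          ((x0+x1-x2/2+w*y2/2)^2+(y0+y1-y2/2-w*x2/2)^2)
          = 3*(((x0+x1+x2)*x2+(y0+y1+y2)*y2 - ((x0+x1+x2)^2 + (y0+y1+y2)^2)/2)^2
            + (((y0+y1+y2)*x2-(x0+x1+x2)*y2 + w*((x0+x1+x2)^2 + (y0+y1+y2)^2)/6)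
               - w*((x0+x1+x2)^2 + (y0+y1+y2)^2)/3)^2) := by
        linear_combination ((1/6)*y2^4 + (1/3)*x2^2*y2^2 + (1/6)*x2^4 + (1/6)*y1*y2^3 + (1/6)*y1*x2^2*y2 + (-1/4)*y1^2*y2^2 + (1/12)*y1^2*x2^2 + (-1/3)*y1^3*y2 + (-1/12)*y1^4 + (1/6)*x1*x2*y2^2 + (1/6)*x1*x2^3 + (-2/3)*x1*y1*x2*y2 + (-1/3)*x1*y1^2*x2 + (1/12)*x1^2*y2^2 + (-1/4)*x1^2*x2^2 + (-1/3)*x1^2*y1*y2 + (-1/6)*x1^2*y1^2 + (-1/3)*x1^3*x2 + (-1/12)*x1^4 + (1/6)*y0*y2^3 + (1/6)*y0*x2^2*y2 + (-1/2)*y0*y1*y2^2 + (1/6)*y0*y1*x2^2 + (-1/1)*y0*y1^2*y2 + (-1/3)*y0*y1^3 + (-2/3)*y0*x1*x2*y2 + (-2/3)*y0*x1*y1*x2 + (-1/3)*y0*x1^2*y2 + (-1/3)*y0*x1^2*y1 + (-1/4)*y0^2*y2^2 + (1/12)*y0^2*x2^2 + (-1/1)*y0^2*y1*y2 + (-1/2)*y0^2*y1^2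 + (-1/3)*y0^2*x1*x2 + (-1/6)*y0^2*x1^2 + (-1/3)*y0^3*y2 + (-1/3)*y0^3*y1 + (-1/12)*y0^4 + (1/6)*x0*x2*y2^2 + (1/6)*x0*x2^3 + (-2/3)*x0*y1*x2*y2 + (-1/3)*x0*y1^2*x2 + (1/6)*x0*x1*y2^2 + (-1/2)*x0*x1*x2^2 + (-2/3)*x0*x1*y1*y2 + (-1/3)*x0*x1*y1^2 + (-1/1)*x0*x1^2*x2 + (-1/3)*x0*x1^3 + (-2/3)*x0*y0*x2*y2 + (-2/3)*x0*y0*y1*x2 + (-2/3)*x0*y0*x1*y2 + (-2/3)*x0*y0*x1*y1 + (-1/3)*x0*y0^2*x2 + (-1/3)*x0*y0^2*x1 + (1/12)*x0^2*y2^2 + (-1/4)*x0^2*x2^2 + (-1/3)*x0^2*y1*y2 + (-1/6)*x0^2*y1^2 + (-1/1)*x0^2*x1*x2 + (-1/2)*x0^2*x1^2 + (-1/3)*x0^2*y0*y2 + (-1/3)*x0^2*y0*y1 + (-1/6)*x0^2*y0^2 + (-1/3)*x0^3*x2 + (-1/3)*x0^3*x1 + (-1/12)*x0^4) * hw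
      rw [hid] at h
      linarith
    · -- b2
      have hid : (((x0+x1+x2)*x2+(y0+y1+y2)*y2 - ((x0+x1+x2)^2 + (y0+y1+y2)^2)/2)
            + ((x0+x1+x2)^2 + (y0+y1+y2)^2)/2)^2
          + (((y0+y1+y2)*x2-(x0+x1+x2)*y2 + w*((x0+x1+x2)^2 + (y0+y1+y2)^2)/6)
            - w*((x0+x1+x2)^2 + (y0+y1+y2)^2)/6)^2
          = ((x0+x1+x2)^2 + (y0+y1+y2)^2)*(x2^2+y2^2) := by ring
      rw [hid]
      calc ((x0+x1+x2)^2 + (y0+y1+y2)^2)*(x2^2+y2^2)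
          ≤ ((x0+x1+x2)^2 + (y0+y1+y2)^2)*1 := by
            exact mul_le_mul_of_nonneg_left h2 hm.le
        _ = (x0+x1+x2)^2 + (y0+y1+y2)^2 := by ring
    · -- d
      have hid : ((((x0+x1+x2)*x1+(y0+y1+y2)*y1 - ((x0+x1+x2)^2 + (y0+y1+y2)^2)/2))
            + (((x0+x1+x2)*x2+(y0+y1+y2)*y2 - ((x0+x1+x2)^2 + (y0+y1+y2)^2)/2)))^2
          + ((((y0+y1+y2)*x1-(x0+x1+x2)*y1 - w*((x0+x1+x2)^2 + (y0+y1+y2)^2)/6))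
            + (((y0+y1+y2)*x2-(x0+x1+x2)*y2 + w*((x0+x1+x2)^2 + (y0+y1+y2)^2)/6)))^2
          = ((x0+x1+x2)^2 + (y0+y1+y2)^2)*(x0^2+y0^2) := by ring
      rw [hid]
      calc ((x0+x1+x2)^2 + (y0+y1+y2)^2)*(x0^2+y0^2)
          ≤ ((x0+x1+x2)^2 + (y0+y1+y2)^2)*1 := by
            exact mul_le_mul_of_nonneg_left h0 hm.le
        _ = (x0+x1+x2)^2 + (y0+y1+y2)^2 := by ring
  · -- m = 0
    have hx : (x0+x1+x2)^2 = 0 :=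
      le_antisymm (by linarith only [hm, sq_nonneg (y0+y1+y2)]) (sq_nonneg _)
    have hy : (y0+y1+y2)^2 = 0 :=
      le_antisymm (by linarith only [hm, sq_nonneg (x0+x1+x2)]) (sq_nonneg _)
    have hcx : x0+x1+x2 = 0 := by
      have := sq_eq_zero_iff.mp hx; exact this
    have hcy : y0+y1+y2 = 0 := by
      have := sq_eq_zero_iff.mp hy; exact this
    have hid : (x0+x1-x2/2+w*y2/2)^2+(y0+y1-y2/2-w*x2/2)^2 = 3*(x2^2+y2^2) := by
      linear_combination (x0+x1+x2 - 3*x2 + w*y2)*hcx + (y0+y1+y2 - 3*y2 - w*x2)*hcy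
        + ((x2^2+y2^2)/4)*hw
    rw [hid] at hn3
    linarith

open Complex Finset

/-- Let `ω = exp(2πi/3)`. For every `a ∈ ℂ³` with `‖a‖_∞ ≤ 1`, at least one of the vectors
`(1,ω,1)`, `(1,ω²,1)`, `(1,1,ω)`, `(1,1,ω²)` has inner product with `a` of modulus `≤ √3`. -/
theorem stmt_19 (ω : ℂ) (hω : ω = Complex.exp (2 * Real.pi * Complex.I / 3))
    (a : Fin 3 → ℂ) (ha : ∀ i, ‖a i‖ ≤ 1) :
    ∃ y ∈ ({![1, ω, 1], ![1, ω ^ 2, 1], ![1, 1, ω], ![1, 1, ω ^ 2]} : Set (Fin 3 → ℂ)),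
      ‖∑ i, a i * (starRingEnd ℂ) (y i)‖ ≤ Real.sqrt 3 := by
  have hw : Real.sqrt 3 ^ 2 = 3 := Real.sq_sqrt (by norm_num)
  have hw0 : (0:ℝ) < Real.sqrt 3 := Real.sqrt_pos.mpr (by norm_num)
  have hexp : ω = Complex.cos ((2*Real.pi/3 : ℝ) : ℂ) + Complex.sin ((2*Real.pi/3 : ℝ) : ℂ) * Complex.I := by
    rw [hω, show (2 * Real.pi * Complex.I / 3 : ℂ) = (((2*Real.pi/3 : ℝ)):ℂ)*Complex.I by
      push_cast; ring, Complex.exp_mul_I]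
  have hcos : Real.cos (2*Real.pi/3) = -(1/2) := by
    rw [show 2*Real.pi/3 = Real.pi - Real.pi/3 by ring, Real.cos_pi_sub, Real.cos_pi_div_three]
  have hsin : Real.sin (2*Real.pi/3) = Real.sqrt 3/2 := by
    rw [show 2*Real.pi/3 = Real.pi - Real.pi/3 by ring, Real.sin_pi_sub, Real.sin_pi_div_three]
  have hωre : ω.re = -(1/2) := by
    rw [hexp, Complex.add_re, Complex.mul_re, Complex.I_re, Complex.I_im,
      Complex.cos_ofReal_re, Complex.sin_ofReal_im, hcos]; ring
  have hωim : ω.im = Real.sqrt 3/2 := by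
    rw [hexp, Complex.add_im, Complex.mul_im, Complex.I_re, Complex.I_im,
      Complex.cos_ofReal_im, Complex.sin_ofReal_re, hsin]; ring
  have hω2re : (ω^2).re = -(1/2) := by
    rw [pow_two, Complex.mul_re, hωre, hωim]
    linear_combination (-(1/4))*hw
  have hω2im : (ω^2).im = -(Real.sqrt 3/2) := by
    rw [pow_two, Complex.mul_im, hωre, hωim]; ring
  by_contra hc
  push_neg at hc
  have hc1 := hc ![1, ω, 1] (by left; rfl)
  have hc2 := hc ![1, ω^2, 1] (by right; left; rfl)
  have hc3 := hc ![1, 1, ω] (by right; right; left; rfl)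
  have hc4 := hc ![1, 1, ω^2] (by right; right; right; rfl)
  have hnorm : ∀ i, (a i).re^2 + (a i).im^2 ≤ 1 := by
    intro i
    have h := ha i
    have h2 : ‖a i‖^2 ≤ 1 := by nlinarith [norm_nonneg (a i), ha i]
    rw [Complex.sq_norm, Complex.normSq_apply] at h2
    linarith only [h2]
  have sqstep : ∀ z : ℂ, Real.sqrt 3 < ‖z‖ → 3 < Complex.normSq z := by
    intro z hz
    rw [← Complex.sq_norm]
    nlinarith [hz, hw, hw0, mul_pos hw0 (sub_pos.2 hz)]
  have hs1 := sqstep _ hc1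
  have hs2 := sqstep _ hc2
  have hs3 := sqstep _ hc3
  have hs4 := sqstep _ hc4
  have hre1 : (∑ i, a i * (starRingEnd ℂ) (![1, ω, 1] i)).re
      = (a 0).re+(a 2).re-(a 1).re/2+Real.sqrt 3*(a 1).im/2 := by
    simp only [Fin.sum_univ_three, Matrix.cons_val_zero, Matrix.cons_val_one, Matrix.head_cons,
      Matrix.cons_val_two, Matrix.tail_cons, map_one, mul_one, Complex.add_re, Complex.mul_re,
      Complex.conj_re, Complex.conj_im, hωre, hωim]
    ring
  have him1 : (∑ i, a i * (starRingEnd ℂ) (![1, ω, 1] i)).im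
      = (a 0).im+(a 2).im-(a 1).im/2-Real.sqrt 3*(a 1).re/2 := by
    simp only [Fin.sum_univ_three, Matrix.cons_val_zero, Matrix.cons_val_one, Matrix.head_cons,
      Matrix.cons_val_two, Matrix.tail_cons, map_one, mul_one, Complex.add_im, Complex.mul_im,
      Complex.conj_re, Complex.conj_im, hωre, hωim]
    ring
  have hre2 : (∑ i, a i * (starRingEnd ℂ) (![1, ω^2, 1] i)).re
      = (a 0).re+(a 2).re-(a 1).re/2-Real.sqrt 3*(a 1).im/2 := by
    simp only [Fin.sum_univ_three, Matrix.cons_val_zero, Matrix.cons_val_one, Matrix.head_cons,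
      Matrix.cons_val_two, Matrix.tail_cons, map_one, mul_one, Complex.add_re, Complex.mul_re,
      Complex.conj_re, Complex.conj_im, hω2re, hω2im]
    ring
  have him2 : (∑ i, a i * (starRingEnd ℂ) (![1, ω^2, 1] i)).im
      = (a 0).im+(a 2).im-(a 1).im/2+Real.sqrt 3*(a 1).re/2 := by
    simp only [Fin.sum_univ_three, Matrix.cons_val_zero, Matrix.cons_val_one, Matrix.head_cons,
      Matrix.cons_val_two, Matrix.tail_cons, map_one, mul_one, Complex.add_im, Complex.mul_im,
      Complex.conj_re, Complex.conj_im, hω2re, hω2im]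
    ring
  have hre3 : (∑ i, a i * (starRingEnd ℂ) (![1, 1, ω] i)).re
      = (a 0).re+(a 1).re-(a 2).re/2+Real.sqrt 3*(a 2).im/2 := by
    simp only [Fin.sum_univ_three, Matrix.cons_val_zero, Matrix.cons_val_one, Matrix.head_cons,
      Matrix.cons_val_two, Matrix.tail_cons, map_one, mul_one, Complex.add_re, Complex.mul_re,
      Complex.conj_re, Complex.conj_im, hωre, hωim]
    ring
  have him3 : (∑ i, a i * (starRingEnd ℂ) (![1, 1, ω] i)).im
      = (a 0).im+(a 1).im-(a 2).im/2-Real.sqrt 3*(a 2).re/2 := by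
    simp only [Fin.sum_univ_three, Matrix.cons_val_zero, Matrix.cons_val_one, Matrix.head_cons,
      Matrix.cons_val_two, Matrix.tail_cons, map_one, mul_one, Complex.add_im, Complex.mul_im,
      Complex.conj_re, Complex.conj_im, hωre, hωim]
    ring
  have hre4 : (∑ i, a i * (starRingEnd ℂ) (![1, 1, ω^2] i)).re
      = (a 0).re+(a 1).re-(a 2).re/2-Real.sqrt 3*(a 2).im/2 := by
    simp only [Fin.sum_univ_three, Matrix.cons_val_zero, Matrix.cons_val_one, Matrix.head_cons,
      Matrix.cons_val_two, Matrix.tail_cons, map_one, mul_one, Complex.add_re, Complex.mul_re,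
      Complex.conj_re, Complex.conj_im, hω2re, hω2im]
    ring
  have him4 : (∑ i, a i * (starRingEnd ℂ) (![1, 1, ω^2] i)).im
      = (a 0).im+(a 1).im-(a 2).im/2+Real.sqrt 3*(a 2).re/2 := by
    simp only [Fin.sum_univ_three, Matrix.cons_val_zero, Matrix.cons_val_one, Matrix.head_cons,
      Matrix.cons_val_two, Matrix.tail_cons, map_one, mul_one, Complex.add_im, Complex.mul_im,
      Complex.conj_re, Complex.conj_im, hω2re, hω2im]
    ring
  rw [Complex.normSq_apply, hre1, him1] at hs1
  rw [Complex.normSq_apply, hre2, him2] at hs2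
  rw [Complex.normSq_apply, hre3, him3] at hs3
  rw [Complex.normSq_apply, hre4, him4] at hs4
  exact main_real (Real.sqrt 3) (a 0).re (a 0).im (a 1).re (a 1).im (a 2).re (a 2).im hw
    (hnorm 0) (hnorm 1) (hnorm 2) (by linarith only [hs1]) (by linarith only [hs2])
    (by linarith only [hs3]) (by linarith only [hs4])
end
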